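/- arXiv:1105.1737 — 11 statements merged into one kernel-verified Lean document; each statement's English description precedes it below -/
import Mathlib

section
/- Let E and F be normed spaces and let P : E → F be a polynomial of degree at most n (i.e., P = P₀ + P₁ + ⋯ + Pₙ where each Pₖ is a k-homogeneous polynomial, not assumed continuous). If P maps every compact subset of E to a compact subset of F, then P is continuous. -/
open Finset Filter Topology

section Aux

variable {E F : Type*} [NormedAddCommGroup E] [NormedSpace ℝ E]
    [NormedAddCommGroup F] [NormedSpace ℝ F]
    (n : ℕ) (L : ∀ k : ℕ, MultilinearMap ℝ (fun _ : Fin k => E) F)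

/-- The `j`-th coefficient of `t ↦ P (x + t • h)`. -/
noncomputable def polyCoeff (x h : E) (j : ℕ) : F :=
  ∑ k ∈ Finset.range (n + 1),
    ∑ S ∈ Finset.univ.filter (fun S : Finset (Fin k) => S.card = j),
      L k (S.piecewise (fun _ => h) (fun _ => x))

lemma piecewise_smul_eq (k : ℕ) (x h : E) (t : ℝ) (S : Finset (Fin k)) :
    L k (S.piecewise (fun _ => t • h) (fun _ => x))
      = t ^ S.card • L k (S.piecewise (fun _ => h) (fun _ => x)) := by
  have hmap := (L k).map_piecewise_smul (fun _ => t)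
    (S.piecewise (fun _ => h) (fun _ => x)) S
  simp only [Finset.prod_const] at hmap
  rw [← hmap]
  congr 1
  funext i
  by_cases hi : i ∈ S <;> simp [Finset.piecewise, hi]

lemma poly_expansion (x h : E) (t : ℝ) :
    ∑ k ∈ Finset.range (n + 1), L k (fun _ => x + t • h)
      = ∑ j ∈ Finset.range (n + 1), t ^ j • polyCoeff n L x h j := by
  have step : ∀ k ∈ Finset.range (n + 1),
      L k (fun _ => x + t • h)
        = ∑ j ∈ Finset.range (n + 1), t ^ j •
            ∑ S ∈ Finset.univ.filter (fun S : Finset (Fin k) => S.card = j),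
              L k (S.piecewise (fun _ => h) (fun _ => x)) := by
    intro k hk
    rw [Finset.mem_range, Nat.lt_succ_iff] at hk
    have h1 : (fun _ : Fin k => x + t • h)
        = (fun _ : Fin k => t • h) + (fun _ : Fin k => x) := by
      funext i; simp [add_comm]
    rw [h1, MultilinearMap.map_add_univ]
    have maps : ∀ S ∈ (Finset.univ : Finset (Finset (Fin k))),
        S.card ∈ Finset.range (n + 1) := by
      intro S _
      have hSk : S.card ≤ k := by simpa using S.card_le_univ
      exact Finset.mem_range.2 (Nat.lt_succ_of_le (hSk.trans hk))
    rw [← Finset.sum_fiberwise_of_maps_to maps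
      (fun S : Finset (Fin k) => L k (S.piecewise (fun _ => t • h) (fun _ => x)))]
    refine Finset.sum_congr rfl fun j _ => ?_
    rw [Finset.smul_sum]
    refine Finset.sum_congr rfl fun S hS => ?_
    rw [piecewise_smul_eq, (Finset.mem_filter.1 hS).2]
  rw [Finset.sum_congr rfl step, Finset.sum_comm]
  refine Finset.sum_congr rfl fun j _ => ?_
  rw [polyCoeff, Finset.smul_sum]

lemma polyCoeff_smul (x h : E) (s : ℝ) (j : ℕ) :
    polyCoeff n L x (s • h) j = s ^ j • polyCoeff n L x h j := by
  rw [polyCoeff, polyCoeff, Finset.smul_sum]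
  refine Finset.sum_congr rfl fun k _ => ?_
  rw [Finset.smul_sum]
  refine Finset.sum_congr rfl fun S hS => ?_
  rw [piecewise_smul_eq, (Finset.mem_filter.1 hS).2]

/-- Vandermonde inversion: the coefficients of a polynomial curve are fixed linear
combinations of its values at `0, 1, ..., n`. -/
lemma coeff_formula {q : ℝ → F} {c : ℕ → F}
    (hq : ∀ t : ℝ, q t = ∑ j ∈ Finset.range (n + 1), t ^ j • c j) (j : Fin (n + 1)) :
    c (j : ℕ) = ∑ i : Fin (n + 1),
      ((Matrix.vandermonde fun i : Fin (n + 1) => ((i : ℕ) : ℝ))⁻¹ j i) • q ((i : ℕ) : ℝ) := by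
  set V := Matrix.vandermonde fun i : Fin (n + 1) => ((i : ℕ) : ℝ) with hV
  have hinj : Function.Injective fun i : Fin (n + 1) => ((i : ℕ) : ℝ) := by
    intro a b hab
    exact Fin.ext (Nat.cast_injective hab)
  have hdet : V.det ≠ 0 := by
    rw [hV, Matrix.det_vandermonde_ne_zero_iff]
    exact hinj
  have hinv : V⁻¹ * V = 1 := Matrix.nonsing_inv_mul V (isUnit_iff_ne_zero.2 hdet)
  have hqv : ∀ i : Fin (n + 1), q ((i : ℕ) : ℝ) = ∑ j' : Fin (n + 1), V i j' • c (j' : ℕ) := by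
    intro i
    rw [hq]
    rw [Finset.sum_range fun j' => (((i : ℕ) : ℝ)) ^ j' • c j']
    rfl
  calc c (j : ℕ) = ∑ j' : Fin (n + 1), ((V⁻¹ * V) j j') • c (j' : ℕ) := by
        rw [hinv]
        simp [Matrix.one_apply, ite_smul]
    _ = ∑ j' : Fin (n + 1), ∑ i : Fin (n + 1), (V⁻¹ j i * V i j') • c (j' : ℕ) := by
        refine Finset.sum_congr rfl fun j' _ => ?_
        rw [Matrix.mul_apply, Finset.sum_smul]
    _ = ∑ i : Fin (n + 1), (V⁻¹ j i) • q ((i : ℕ) : ℝ) := by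
        rw [Finset.sum_comm]
        refine Finset.sum_congr rfl fun i _ => ?_
        rw [hqv i, Finset.smul_sum]
        refine Finset.sum_congr rfl fun j' _ => ?_
        rw [mul_smul]

end Aux

/-- A (possibly discontinuous) polynomial of degree at most `n` between normed spaces,
mapping compact sets to compact sets, is continuous. -/
theorem stmt_0
    {E F : Type*} [NormedAddCommGroup E] [NormedSpace ℝ E]
    [NormedAddCommGroup F] [NormedSpace ℝ F]
    (n : ℕ) (P : E → F)
    (L : ∀ k : ℕ, MultilinearMap ℝ (fun _ : Fin k => E) F)
    (hsym : ∀ (k : ℕ) (σ : Equiv.Perm (Fin k)) (v : Fin k → E),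
      L k (fun i => v (σ i)) = L k v)
    (hP : ∀ x : E, P x = ∑ k ∈ Finset.range (n + 1), L k (fun _ => x))
    (hcomp : ∀ K : Set E, IsCompact K → IsCompact (P '' K)) :
    Continuous P := by
  classical
  set c : E → E → ℕ → F := polyCoeff n L with hc
  have hexp : ∀ (x h : E) (t : ℝ),
      P (x + t • h) = ∑ j ∈ Finset.range (n + 1), t ^ j • c x h j := by
    intro x h t
    rw [hP]
    exact poly_expansion n L x h t
  set B := (Matrix.vandermonde fun i : Fin (n + 1) => ((i : ℕ) : ℝ))⁻¹ with hB
  have hform : ∀ (x h : E) (j : Fin (n + 1)),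
      c x h (j : ℕ) = ∑ i : Fin (n + 1), B j i • P (x + ((i : ℕ) : ℝ) • h) :=
    fun x h j => coeff_formula n (fun t => hexp x h t) j
  set A : ℝ := ∑ j : Fin (n + 1), ∑ i : Fin (n + 1), |B j i| with hA
  have hApos : 0 ≤ A :=
    Finset.sum_nonneg fun j _ => Finset.sum_nonneg fun i _ => abs_nonneg _
  rw [continuous_iff_continuousAt]
  intro x
  -- Step 1 : the coefficients are bounded on a small ball around `0`.
  have claim : ∃ r : ℝ, 0 < r ∧ ∃ M : ℝ, 0 ≤ M ∧
      ∀ h : E, ‖h‖ ≤ r → ∀ j : ℕ, j ≤ n → ‖c x h j‖ ≤ M := by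
    by_contra hcl
    push_neg at hcl
    have hcl' : ∀ m : ℕ, ∃ h : E, ‖h‖ ≤ 1 / ((m : ℝ) + 1) ∧
        ∃ j : ℕ, j ≤ n ∧ (m : ℝ) < ‖c x h j‖ := by
      intro m
      obtain ⟨h, hh, j, hjn, hbig⟩ := hcl (1 / ((m : ℝ) + 1)) (by positivity)
        (max (m : ℝ) 0) (le_max_right _ _)
      exact ⟨h, hh, j, hjn, lt_of_le_of_lt (le_max_left _ _) hbig⟩
    choose h hle j hjn hbig using hcl'
    have ht : Tendsto h atTop (𝓝 0) := by
      refine squeeze_zero_norm (fun m => hle m) ?_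
      exact tendsto_one_div_add_atTop_nhds_zero_nat
    set K : Set E := ⋃ i : Fin (n + 1),
      insert x (Set.range fun m => x + ((i : ℕ) : ℝ) • h m) with hK
    have hKc : IsCompact K := by
      refine isCompact_iUnion fun i => ?_
      have : Tendsto (fun m => x + ((i : ℕ) : ℝ) • h m) atTop (𝓝 x) := by
        have := (ht.const_smul (((i : ℕ) : ℝ))).const_add x
        simpa using this
      exact this.isCompact_insert_range
    obtain ⟨M₀, hM₀⟩ := Bornology.IsBounded.exists_norm_le (hcomp K hKc).isBounded
    have hM₀0 : 0 ≤ M₀ := by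
      refine le_trans (norm_nonneg (P x)) (hM₀ _ ?_)
      exact ⟨x, Set.mem_iUnion.2 ⟨0, Set.mem_insert _ _⟩, rfl⟩
    have hbound : ∀ m : ℕ, ∀ jj : Fin (n + 1), ‖c x (h m) (jj : ℕ)‖ ≤ A * M₀ := by
      intro m jj
      rw [hform]
      calc ‖∑ i : Fin (n + 1), B jj i • P (x + ((i : ℕ) : ℝ) • h m)‖
          ≤ ∑ i : Fin (n + 1), ‖B jj i • P (x + ((i : ℕ) : ℝ) • h m)‖ :=
            norm_sum_le _ _
        _ ≤ ∑ i : Fin (n + 1), |B jj i| * M₀ := by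
            refine Finset.sum_le_sum fun i _ => ?_
            rw [norm_smul, Real.norm_eq_abs]
            refine mul_le_mul_of_nonneg_left ?_ (abs_nonneg _)
            refine hM₀ _ ⟨x + ((i : ℕ) : ℝ) • h m, ?_, rfl⟩
            exact Set.mem_iUnion.2 ⟨i, Set.mem_insert_of_mem _ ⟨m, rfl⟩⟩
        _ ≤ A * M₀ := by
            rw [hA, ← Finset.sum_mul]
            refine mul_le_mul_of_nonneg_right ?_ hM₀0
            exact Finset.single_le_sum
              (f := fun j' : Fin (n + 1) => ∑ i : Fin (n + 1), |B j' i|)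
              (fun j' _ => Finset.sum_nonneg fun i _ => abs_nonneg _)
              (Finset.mem_univ jj)
    obtain ⟨m, hm⟩ := exists_nat_gt (A * M₀)
    have h1 : (m : ℝ) < ‖c x (h m) (j m)‖ := hbig m
    have h2 : ‖c x (h m) (j m)‖ ≤ A * M₀ := by
      have := hbound m ⟨j m, Nat.lt_succ_of_le (hjn m)⟩
      simpa using this
    linarith
  obtain ⟨r, hr, M, hM0, hM⟩ := claim
  -- Step 2 : homogeneity of the coefficients gives a linear modulus of continuity.
  have key : ∀ h : E, ‖h‖ ≤ r → ‖P (x + h) - P x‖ ≤ (n * M / r) * ‖h‖ := by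
    intro h hhr
    have e1 : P (x + h) = ∑ j ∈ Finset.range (n + 1), c x h j := by
      have := hexp x h 1
      simpa using this
    have e0 : P x = c x h 0 := by
      have := hexp x h 0
      simp only [zero_smul, add_zero] at this
      rw [this, Finset.sum_eq_single_of_mem 0 (Finset.mem_range.2 (Nat.succ_pos n))]
      · simp
      · intro j _ hj
        simp [zero_pow hj]
    have e2 : P (x + h) - P x = ∑ j ∈ Finset.Ico 1 (n + 1), c x h j := by
      rw [e1, e0, Finset.range_eq_Ico,
        Finset.sum_eq_sum_Ico_succ_bot (Nat.succ_pos n) (fun j => c x h j)]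
      simp only [Nat.zero_add]
      abel
    have term : ∀ j ∈ Finset.Ico 1 (n + 1), ‖c x h j‖ ≤ M / r * ‖h‖ := by
      intro j hj
      obtain ⟨hj1, hjn'⟩ := Finset.mem_Ico.1 hj
      by_cases h0 : h = 0
      · have : c x h j = 0 := by
          have := polyCoeff_smul n L x (0 : E) (0 : ℝ) j
          simp only [smul_zero, zero_pow (Nat.one_le_iff_ne_zero.1 hj1), zero_smul] at this
          rw [hc, h0, this]
        rw [this, h0]
        simp
      · have hh0 : 0 < ‖h‖ := norm_pos_iff.2 h0
        set s : ℝ := ‖h‖ / r with hs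
        have hs0 : 0 < s := div_pos hh0 hr
        have hs1 : s ≤ 1 := (div_le_one hr).2 hhr
        have hrep : h = s • ((r / ‖h‖) • h) := by
          rw [smul_smul, hs]
          rw [div_mul_div_comm, mul_comm]
          rw [div_self (by positivity), one_smul]
        have hgnorm : ‖(r / ‖h‖) • h‖ ≤ r := by
          rw [norm_smul, Real.norm_eq_abs, abs_of_pos (by positivity), div_mul_cancel₀]
          exact hh0.ne'
        have : ‖c x h j‖ = s ^ j * ‖c x ((r / ‖h‖) • h) j‖ := by
          conv_lhs => rw [hrep]
          rw [hc, polyCoeff_smul, norm_smul, Real.norm_eq_abs,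
            abs_of_pos (pow_pos hs0 j)]
        rw [this]
        calc s ^ j * ‖c x ((r / ‖h‖) • h) j‖
            ≤ s ^ j * M := by
              refine mul_le_mul_of_nonneg_left ?_ (by positivity)
              exact hM _ hgnorm j (Nat.lt_succ_iff.1 hjn')
          _ ≤ s * M := by
              refine mul_le_mul_of_nonneg_right ?_ hM0
              calc s ^ j ≤ s ^ 1 := pow_le_pow_of_le_one hs0.le hs1 hj1
                _ = s := pow_one s
          _ = M / r * ‖h‖ := by
              rw [hs]; ring
    calc ‖P (x + h) - P x‖ ≤ ∑ j ∈ Finset.Ico 1 (n + 1), ‖c x h j‖ := by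
          rw [e2]; exact norm_sum_le _ _
      _ ≤ ∑ _j ∈ Finset.Ico 1 (n + 1), M / r * ‖h‖ := Finset.sum_le_sum term
      _ = n * (M / r * ‖h‖) := by
          rw [Finset.sum_const, Nat.card_Ico]
          simp [nsmul_eq_mul]
      _ = (n * M / r) * ‖h‖ := by ring
  -- Step 3 : conclude continuity at `x`.
  set C : ℝ := n * M / r with hC
  have hC0 : 0 ≤ C := by positivity
  rw [Metric.continuousAt_iff]
  intro ε hε
  refine ⟨min r (ε / (C + 1)), lt_min hr (by positivity), fun {y} hy => ?_⟩
  rw [dist_eq_norm] at hy ⊢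
  have hyr : ‖y - x‖ ≤ r := le_of_lt (lt_of_lt_of_le hy (min_le_left _ _))
  have := key (y - x) hyr
  rw [add_sub_cancel] at this
  calc ‖P y - P x‖ ≤ C * ‖y - x‖ := this
    _ ≤ C * (ε / (C + 1)) := by
        refine mul_le_mul_of_nonneg_left ?_ hC0
        exact le_of_lt (lt_of_lt_of_le hy (min_le_right _ _))
    _ < ε := by
        rw [div_eq_inv_mul, ← mul_assoc]
        have : C * (C + 1)⁻¹ < 1 := by
          rw [mul_inv_lt_iff₀ (by positivity)]
          linarith
        nlinarith
end

section
/- Let E and F be normed spaces and P : E → F a polynomial of degree at most n. Then P is continuous if and only if P maps compact subsets of E to compact subsets of F. -/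
open Finset

/-- Sum over all subsets of `Fin k`, grouped by cardinality (with range padded to `n+1`). -/
lemma sum_finsets_by_card {β : Type*} [AddCommMonoid β] {k n : ℕ} (hk : k ≤ n)
    (f : Finset (Fin k) → β) :
    ∑ s : Finset (Fin k), f s
      = ∑ j ∈ Finset.range (n+1),
          ∑ s ∈ Finset.powersetCard j (Finset.univ : Finset (Fin k)), f s := by
  rw [← Finset.powerset_univ, Finset.powerset_card_disjiUnion]
  refine (Finset.sum_disjiUnion _ _ _).trans ?_
  apply Finset.sum_subset
  · apply Finset.range_subset_range.mpr
    simp only [Finset.card_univ, Fintype.card_fin]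
    omega
  · intro j _ hnj
    rw [Finset.powersetCard_eq_empty.mpr ?_, Finset.sum_empty]
    simp only [Finset.card_univ, Fintype.card_fin]
    simp only [Finset.mem_range, Finset.card_univ, Fintype.card_fin] at hnj
    omega

/-- Interpolation: coefficients of a vector-valued polynomial bounded on `[0,1]` are bounded. -/
lemma interp_bound {F : Type*} [NormedAddCommGroup F] [NormedSpace ℝ F] (n : ℕ) :
    ∃ C : ℝ, 0 ≤ C ∧ ∀ (a : Fin (n+1) → F) (M : ℝ),
      (∀ t ∈ Set.Icc (0:ℝ) 1, ‖∑ k : Fin (n+1), t ^ (k : ℕ) • a k‖ ≤ M) →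
      ∀ k, ‖a k‖ ≤ C * M := by
  have hn1 : (0:ℝ) < (n:ℝ) + 1 := by positivity
  set t : Fin (n+1) → ℝ := fun j => (j : ℕ) / ((n:ℝ)+1) with ht
  have htinj : Function.Injective t := by
    intro i j hij
    have : ((i : ℕ) : ℝ) = ((j : ℕ) : ℝ) := by
      simp only [ht] at hij
      field_simp at hij
      exact_mod_cast hij
    exact Fin.ext (Nat.cast_injective this)
  have htmem : ∀ j, t j ∈ Set.Icc (0:ℝ) 1 := by
    intro j
    constructor
    · positivity
    · rw [div_le_one hn1]
      have : (j : ℕ) < n + 1 := j.isLt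
      exact_mod_cast this.le
  set V := Matrix.vandermonde t with hV
  have hdet : V.det ≠ 0 := Matrix.det_vandermonde_ne_zero_iff.mpr htinj
  have hinv : V⁻¹ * V = 1 := Matrix.nonsing_inv_mul V (isUnit_iff_ne_zero.mpr hdet)
  refine ⟨∑ k : Fin (n+1), ∑ j : Fin (n+1), |V⁻¹ k j|, by positivity, ?_⟩
  intro a M hb k
  have hM : 0 ≤ M := le_trans (norm_nonneg _) (hb 0 ⟨le_refl _, zero_le_one⟩)
  have key : a k = ∑ j, V⁻¹ k j • ∑ l : Fin (n+1), t j ^ (l : ℕ) • a l := by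
    have h1 : ∀ j, (∑ l : Fin (n+1), t j ^ (l : ℕ) • a l) = ∑ l, V j l • a l := by
      intro j
      simp [hV, Matrix.vandermonde]
    calc a k = ∑ l, ((1 : Matrix (Fin (n+1)) (Fin (n+1)) ℝ) k l) • a l := by
          simp [Matrix.one_apply, ite_smul]
      _ = ∑ l, ((V⁻¹ * V) k l) • a l := by rw [hinv]
      _ = ∑ l, ∑ j, (V⁻¹ k j * V j l) • a l := by
          simp [Matrix.mul_apply, Finset.sum_smul]
      _ = ∑ j, ∑ l, (V⁻¹ k j * V j l) • a l := Finset.sum_comm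
      _ = ∑ j, V⁻¹ k j • ∑ l, V j l • a l := by
          simp [Finset.smul_sum, smul_smul]
      _ = ∑ j, V⁻¹ k j • ∑ l : Fin (n+1), t j ^ (l : ℕ) • a l := by
          simp only [h1]
  calc ‖a k‖ = ‖∑ j, V⁻¹ k j • ∑ l : Fin (n+1), t j ^ (l : ℕ) • a l‖ := by rw [← key]
    _ ≤ ∑ j : Fin (n+1), ‖V⁻¹ k j • ∑ l : Fin (n+1), t j ^ (l : ℕ) • a l‖ := norm_sum_le _ _
    _ ≤ ∑ j : Fin (n+1), |V⁻¹ k j| * M := by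
        apply Finset.sum_le_sum
        intro j _
        rw [norm_smul, Real.norm_eq_abs]
        exact mul_le_mul_of_nonneg_left (hb _ (htmem j)) (abs_nonneg _)
    _ = (∑ j : Fin (n+1), |V⁻¹ k j|) * M := by rw [Finset.sum_mul]
    _ ≤ (∑ k : Fin (n+1), ∑ j : Fin (n+1), |V⁻¹ k j|) * M := by
        refine mul_le_mul_of_nonneg_right ?_ hM
        exact Finset.single_le_sum (f := fun i : Fin (n+1) => ∑ j : Fin (n+1), |V⁻¹ i j|)
          (fun i _ => Finset.sum_nonneg fun j _ => abs_nonneg _) (Finset.mem_univ k)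

/-- A map sending compact sets to compact sets is bounded near every point. -/
lemma bounded_near {E F : Type*} [NormedAddCommGroup E] [NormedSpace ℝ E]
    [NormedAddCommGroup F] [NormedSpace ℝ F] {P : E → F}
    (hcomp : ∀ K : Set E, IsCompact K → IsCompact (P '' K)) (x₀ : E) :
    ∃ r > (0:ℝ), ∃ M, ∀ y, ‖y - x₀‖ ≤ r → ‖P y‖ ≤ M := by
  by_contra hcon
  push_neg at hcon
  have hsel : ∀ m : ℕ, ∃ y : E, ‖y - x₀‖ ≤ 1/((m:ℝ)+1) ∧ m < ‖P y‖ := by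
    intro m
    obtain ⟨y, hy1, hy2⟩ := hcon (1/((m:ℝ)+1)) (by positivity) m
    exact ⟨y, hy1, hy2⟩
  choose y hy1 hy2 using hsel
  have hten : Filter.Tendsto y Filter.atTop (nhds x₀) := by
    rw [tendsto_iff_norm_sub_tendsto_zero]
    apply squeeze_zero (fun m => norm_nonneg _) hy1
    exact tendsto_one_div_add_atTop_nhds_zero_nat
  have hK : IsCompact (insert x₀ (Set.range y)) := hten.isCompact_insert_range
  obtain ⟨B, hB⟩ := (hcomp _ hK).isBounded.exists_norm_le
  obtain ⟨m, hm⟩ := exists_nat_gt B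
  have : ‖P (y m)‖ ≤ B := hB _ ⟨y m, Set.mem_insert_of_mem _ ⟨m, rfl⟩, rfl⟩
  have := hy2 m
  linarith

/-- A (possibly discontinuous) polynomial of degree at most `n` between normed spaces
is continuous iff it maps compact sets to compact sets. -/
theorem stmt_1
    {E F : Type*} [NormedAddCommGroup E] [NormedSpace ℝ E]
    [NormedAddCommGroup F] [NormedSpace ℝ F]
    (n : ℕ) (P : E → F)
    (L : ∀ k : ℕ, MultilinearMap ℝ (fun _ : Fin k => E) F)
    (hsym : ∀ (k : ℕ) (σ : Equiv.Perm (Fin k)) (v : Fin k → E),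
      L k (fun i => v (σ i)) = L k v)
    (hP : ∀ x : E, P x = ∑ k ∈ Finset.range (n + 1), L k (fun _ => x)) :
    Continuous P ↔ ∀ K : Set E, IsCompact K → IsCompact (P '' K) := by
  classical
  constructor
  · exact fun h K hK => hK.image h
  intro hcomp
  rw [continuous_iff_continuousAt]
  intro x₀
  obtain ⟨r, hr, M, hM⟩ := bounded_near hcomp x₀
  obtain ⟨C, hC0, hC⟩ := interp_bound (F := F) n
  have hM0 : 0 ≤ M := le_trans (norm_nonneg _) (hM x₀ (by simp [hr.le]))
  set a : ℕ → E → F := fun j h => ∑ k ∈ Finset.range (n+1),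
      ∑ s ∈ Finset.powersetCard j (Finset.univ : Finset (Fin k)),
        L k (s.piecewise (fun _ => h) (fun _ => x₀)) with ha
  -- the key polynomial expansion along rays
  have key : ∀ (u : ℝ) (h : E), P (x₀ + u • h)
      = ∑ j ∈ Finset.range (n+1), u ^ j • a j h := by
    intro u h
    rw [hP]
    have hk : ∀ k ∈ Finset.range (n+1),
        L k (fun _ => x₀ + u • h)
          = ∑ j ∈ Finset.range (n+1), u ^ j •
              ∑ s ∈ Finset.powersetCard j (Finset.univ : Finset (Fin k)),
                L k (s.piecewise (fun _ => h) (fun _ => x₀)) := by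
      intro k hkmem
      have hkn : k ≤ n := Nat.lt_succ_iff.mp (Finset.mem_range.mp hkmem)
      have e1 : (fun _ : Fin k => x₀ + u • h)
          = (fun _ : Fin k => u • h) + (fun _ => x₀) := by
        funext i; simp [add_comm]
      rw [e1, MultilinearMap.map_add_univ]
      have e2 : ∀ s : Finset (Fin k),
          (L k) (s.piecewise (fun _ => u • h) (fun _ => x₀))
            = u ^ s.card • (L k) (s.piecewise (fun _ => h) (fun _ => x₀)) := by
        intro s
        have e3 : s.piecewise (fun _ : Fin k => u • h) (fun _ => x₀)
            = s.piecewise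
                (fun i => u • (s.piecewise (fun _ : Fin k => h) (fun _ => x₀)) i)
                (s.piecewise (fun _ : Fin k => h) (fun _ => x₀)) := by
          funext i
          by_cases hi : i ∈ s
          · simp [Finset.piecewise_eq_of_mem _ _ _ hi]
          · simp [Finset.piecewise_eq_of_notMem _ _ _ hi]
        rw [e3, MultilinearMap.map_piecewise_smul]
        simp
      simp_rw [e2]
      rw [sum_finsets_by_card hkn]
      refine Finset.sum_congr rfl fun j _ => ?_
      rw [Finset.smul_sum]
      refine Finset.sum_congr rfl fun s hs => ?_
      rw [(Finset.mem_powersetCard.mp hs).2]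
    rw [Finset.sum_congr rfl hk, Finset.sum_comm]
    refine Finset.sum_congr rfl fun j _ => ?_
    rw [ha, Finset.smul_sum]
  -- coefficient bounds on the sphere of radius r
  have coeff : ∀ h : E, ‖h‖ = r → ∀ j, ‖a j h‖ ≤ C * M := by
    intro h hh j
    by_cases hj : j < n + 1
    · have hbnd : ∀ u ∈ Set.Icc (0:ℝ) 1,
          ‖∑ jj : Fin (n+1), u ^ (jj : ℕ) • a (jj : ℕ) h‖ ≤ M := by
        intro u hu
        have e : (∑ jj : Fin (n+1), u ^ (jj : ℕ) • a (jj : ℕ) h)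
            = P (x₀ + u • h) := by
          rw [key u h, Finset.sum_range fun j => u ^ j • a j h]
        rw [e]
        apply hM
        rw [add_sub_cancel_left, norm_smul, hh, Real.norm_eq_abs,
          abs_of_nonneg hu.1]
        calc u * r ≤ 1 * r := mul_le_mul_of_nonneg_right hu.2 hr.le
          _ = r := one_mul r
      exact hC (fun jj : Fin (n+1) => a (jj : ℕ) h) M hbnd ⟨j, hj⟩
    · -- j > n : a j h = 0 since powersetCard is empty
      have : a j h = 0 := by
        rw [ha]
        apply Finset.sum_eq_zero
        intro k hk
        rw [Finset.powersetCard_eq_empty.mpr ?_, Finset.sum_empty]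
        simp only [Finset.card_univ, Fintype.card_fin]
        simp only [Finset.mem_range] at hk
        omega
      rw [this, norm_zero]
      positivity
  -- the local Lipschitz-type estimate
  have est : ∀ y : E, ‖y - x₀‖ ≤ r →
      ‖P y - P x₀‖ ≤ ((n : ℝ) * (C * M) / r) * ‖y - x₀‖ := by
    intro y hy
    rcases eq_or_ne y x₀ with rfl | hne
    · simp
    have hh0 : ‖y - x₀‖ ≠ 0 := by
      simpa using sub_ne_zero_of_ne hne
    have hhpos : 0 < ‖y - x₀‖ := (norm_nonneg _).lt_of_ne' hh0
    set s : ℝ := ‖y - x₀‖ / r with hs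
    have hs0 : 0 < s := by positivity
    have hs1 : s ≤ 1 := by
      rw [hs, div_le_one hr]
      exact hy
    set h' : E := (r / ‖y - x₀‖) • (y - x₀) with hh'
    have hh'norm : ‖h'‖ = r := by
      rw [hh', norm_smul, Real.norm_eq_abs, abs_of_pos (by positivity)]
      field_simp
    have hy' : y = x₀ + s • h' := by
      rw [hh', hs, smul_smul]
      rw [div_mul_div_comm]
      rw [mul_comm (‖y - x₀‖) r, div_self (by positivity), one_smul]
      abel
    have hx0 : P x₀ = a 0 h' := by
      have := key 0 h'
      rw [zero_smul, add_zero] at this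
      rw [this, Finset.sum_eq_single 0]
      · simp
      · intro j _ hj
        rw [zero_pow hj, zero_smul]
      · intro hmem
        exact absurd (Finset.mem_range.mpr (Nat.succ_pos n)) hmem
    have hsum : P y - P x₀ = ∑ j ∈ Finset.range n, s ^ (j+1) • a (j+1) h' := by
      rw [hy', key s h', hx0, Finset.sum_range_succ']
      simp
    rw [hsum]
    calc ‖∑ j ∈ Finset.range n, s ^ (j+1) • a (j+1) h'‖
        ≤ ∑ j ∈ Finset.range n, ‖s ^ (j+1) • a (j+1) h'‖ := norm_sum_le _ _
      _ ≤ ∑ j ∈ Finset.range n, s * (C * M) := by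
          apply Finset.sum_le_sum
          intro j _
          rw [norm_smul, Real.norm_eq_abs, abs_of_pos (pow_pos hs0 _)]
          have h1 : s ^ (j+1) ≤ s := by
            calc s ^ (j+1) ≤ s ^ 1 := pow_le_pow_of_le_one hs0.le hs1 (by omega)
              _ = s := pow_one s
          exact mul_le_mul h1 (coeff h' hh'norm (j+1)) (norm_nonneg _)
            (le_trans (pow_pos hs0 _).le h1)
      _ = (n : ℝ) * (s * (C * M)) := by
          rw [Finset.sum_const, Finset.card_range, nsmul_eq_mul]
      _ = ((n : ℝ) * (C * M) / r) * ‖y - x₀‖ := by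
          rw [hs]
          field_simp
  -- conclude continuity at x₀
  rw [ContinuousAt, Metric.tendsto_nhds_nhds]
  intro ε hε
  set Kc : ℝ := (n : ℝ) * (C * M) / r with hKc
  have hKc0 : 0 ≤ Kc := by positivity
  refine ⟨min r (ε / (Kc + 1)), lt_min hr (by positivity), ?_⟩
  intro x hx
  rw [dist_eq_norm] at hx ⊢
  have hxr : ‖x - x₀‖ ≤ r := le_of_lt (lt_of_lt_of_le hx (min_le_left _ _))
  calc ‖P x - P x₀‖ ≤ Kc * ‖x - x₀‖ := est x hxr
    _ ≤ Kc * (ε / (Kc + 1)) := by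
        apply mul_le_mul_of_nonneg_left _ hKc0
        exact le_of_lt (lt_of_lt_of_le hx (min_le_right _ _))
    _ < ε := by
        rw [mul_div_assoc']
        rw [div_lt_iff₀ (by positivity)]
        nlinarith
end

section
/- Let E and F be normed spaces and P : E → F a polynomial of degree at most n. If P is continuous at the point 0, then P is continuous everywhere on E. -/
open Finset
open Finset Filter Topology

noncomputable def interpW (n : ℕ) : Matrix (Fin (n+1)) (Fin (n+1)) ℝ :=
  (Matrix.vandermonde (fun i : Fin (n+1) => ((i : ℕ) : ℝ)))⁻¹

lemma interpW_spec (n : ℕ) {F : Type*} [AddCommGroup F] [Module ℝ F]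
    (c : Fin (n+1) → F) (k : Fin (n+1)) :
    c k = ∑ i : Fin (n+1), interpW n k i • ∑ m : Fin (n+1), (((i:ℕ) : ℝ) ^ (m : ℕ)) • c m := by
  set V := Matrix.vandermonde (fun i : Fin (n+1) => ((i : ℕ) : ℝ)) with hV
  have hdet : V.det ≠ 0 := by
    rw [hV, Matrix.det_vandermonde_ne_zero_iff]
    exact Nat.cast_injective.comp Fin.val_injective
  have hVV : interpW n * V = 1 :=
    Matrix.nonsing_inv_mul _ (isUnit_iff_ne_zero.mpr hdet)
  have : ∀ i m : Fin (n+1), (((i:ℕ):ℝ)) ^ (m:ℕ) = V i m := by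
    intro i m; rw [hV, Matrix.vandermonde_apply]
  calc c k = ∑ m : Fin (n+1), (1 : Matrix (Fin (n+1)) (Fin (n+1)) ℝ) k m • c m := by
        simp [Matrix.one_apply]
    _ = ∑ m : Fin (n+1), (∑ i : Fin (n+1), interpW n k i * V i m) • c m := by
        rw [← hVV]; simp [Matrix.mul_apply]
    _ = ∑ m : Fin (n+1), ∑ i : Fin (n+1), (interpW n k i * V i m) • c m := by
        simp [Finset.sum_smul]
    _ = ∑ i : Fin (n+1), ∑ m : Fin (n+1), (interpW n k i * V i m) • c m :=
        Finset.sum_comm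
    _ = ∑ i : Fin (n+1), interpW n k i • ∑ m : Fin (n+1), (((i:ℕ):ℝ) ^ (m:ℕ)) • c m := by
        simp [Finset.smul_sum, mul_smul, this]

lemma homog_bound {E F : Type*} [NormedAddCommGroup E] [NormedSpace ℝ E]
    [NormedAddCommGroup F] [NormedSpace ℝ F]
    (g : E → F) (k : ℕ) (hg : ∀ (c : ℝ) (x : E), g (c • x) = c ^ k • g x)
    {r M : ℝ} (hr : 0 < r) (hM : ∀ x, ‖x‖ ≤ r → ‖g x‖ ≤ M)
    (R : ℝ) : ∀ x : E, ‖x‖ ≤ R → ‖g x‖ ≤ (1 + R / r) ^ k * M := by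
  intro x hx
  have hM0 : 0 ≤ M := (norm_nonneg _).trans (hM 0 (by simp [hr.le]))
  have hR0 : 0 ≤ R := (norm_nonneg x).trans hx
  have hfac : (1:ℝ) ≤ (1 + R / r) ^ k :=
    one_le_pow₀ (by nlinarith [div_nonneg hR0 hr.le])
  by_cases h : ‖x‖ ≤ r
  · calc ‖g x‖ ≤ M := hM x h
      _ = 1 * M := (one_mul M).symm
      _ ≤ (1 + R / r) ^ k * M := by gcongr
  · push_neg at h
    have hxpos : (0:ℝ) < ‖x‖ := hr.trans h
    set c : ℝ := ‖x‖ / r with hc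
    have hc1 : 0 < c := div_pos hxpos hr
    have hxeq : x = c • ((c⁻¹ : ℝ) • x) := by
      rw [smul_smul, mul_inv_cancel₀ (ne_of_gt hc1), one_smul]
    have hnorm : ‖(c⁻¹ : ℝ) • x‖ ≤ r := by
      rw [norm_smul, norm_inv, Real.norm_eq_abs, abs_of_pos hc1, hc]
      field_simp
      exact le_rfl
    calc ‖g x‖ = ‖c ^ k • g ((c⁻¹ : ℝ) • x)‖ := by rw [← hg, ← hxeq]
      _ = c ^ k * ‖g ((c⁻¹ : ℝ) • x)‖ := by
          rw [norm_smul, Real.norm_eq_abs, abs_of_pos (pow_pos hc1 k)]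
      _ ≤ (1 + R / r) ^ k * M := by
          have hcle : c ≤ 1 + R / r := by
            have : c ≤ R / r := by rw [hc]; exact (div_le_div_iff_of_pos_right hr).mpr hx
            linarith
          gcongr
          exact (hM _ hnorm)

lemma homog_tendsto {E F : Type*} [NormedAddCommGroup E] [NormedSpace ℝ E]
    [NormedAddCommGroup F] [NormedSpace ℝ F]
    (g : E → F) (k : ℕ) (hk : 1 ≤ k)
    (hg : ∀ (c : ℝ) (x : E), g (c • x) = c ^ k • g x)
    {M : ℝ} (hM : ∀ x, ‖x‖ ≤ 1 → ‖g x‖ ≤ M) :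
    Filter.Tendsto g (𝓝 0) (𝓝 0) := by
  have hM0 : 0 ≤ M := (norm_nonneg _).trans (hM 0 (by simp))
  apply squeeze_zero_norm' (a := fun x => M * ‖x‖)
  · filter_upwards [Metric.closedBall_mem_nhds (0:E) one_pos] with x hx
    rw [Metric.mem_closedBall, dist_zero_right] at hx
    rcases eq_or_ne x 0 with rfl | hx0
    · have : g 0 = 0 := by
        have := hg 0 0
        simpa [zero_pow (Nat.one_le_iff_ne_zero.mp hk)] using this
      simp [this]
    · have hxpos : (0:ℝ) < ‖x‖ := norm_pos_iff.mpr hx0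
      have hxeq : x = (‖x‖ : ℝ) • ((‖x‖⁻¹ : ℝ) • x) := by
        rw [smul_smul, mul_inv_cancel₀ (ne_of_gt hxpos), one_smul]
      have hunit : ‖(‖x‖⁻¹ : ℝ) • x‖ ≤ 1 := by
        rw [norm_smul, norm_inv, Real.norm_eq_abs, abs_of_pos hxpos,
          inv_mul_cancel₀ (ne_of_gt hxpos)]
      calc ‖g x‖ = ‖x‖ ^ k * ‖g ((‖x‖⁻¹ : ℝ) • x)‖ := by
            conv_lhs => rw [hxeq, hg, norm_smul, Real.norm_eq_abs,
              abs_of_pos (pow_pos hxpos k)]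
        _ ≤ ‖x‖ ^ k * M := by gcongr; exact hM _ hunit
        _ ≤ ‖x‖ * M := by
            have : ‖x‖ ^ k ≤ ‖x‖ ^ 1 := pow_le_pow_of_le_one hxpos.le hx hk
            simpa using mul_le_mul_of_nonneg_right (by simpa using this) hM0
        _ = M * ‖x‖ := mul_comm _ _
  · have : Filter.Tendsto (fun x : E => M * ‖x‖) (𝓝 0) (𝓝 (M * ‖(0:E)‖)) :=
      (continuous_const.mul continuous_norm).tendsto 0
    simpa using this

lemma piecewise_smul_apply {E F : Type*} [NormedAddCommGroup E] [NormedSpace ℝ E]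
    [NormedAddCommGroup F] [NormedSpace ℝ F] {k : ℕ}
    (f : MultilinearMap ℝ (fun _ : Fin k => E) F) (a x : E) (t : ℝ) (s : Finset (Fin k)) :
    f (s.piecewise (fun _ => a) (fun _ => t • x))
      = t ^ (sᶜ.card) • f (s.piecewise (fun _ => a) (fun _ => x)) := by
  classical
  have h := f.map_piecewise_smul (fun _ => t)
    (s.piecewise (fun _ => a) (fun _ => x)) sᶜ
  have harg : (sᶜ.piecewise (fun i => t • (s.piecewise (fun _ => a) (fun _ => x)) i)
      (s.piecewise (fun _ => a) (fun _ => x)))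
      = s.piecewise (fun _ => a) (fun _ => t • x) := by
    funext i
    by_cases hi : i ∈ s
    · rw [Finset.piecewise_eq_of_notMem _ _ _ (by simp [hi]),
        Finset.piecewise_eq_of_mem _ _ _ hi, Finset.piecewise_eq_of_mem _ _ _ hi]
    · rw [Finset.piecewise_eq_of_mem _ _ _ (by simp [hi]),
        Finset.piecewise_eq_of_notMem _ _ _ hi, Finset.piecewise_eq_of_notMem _ _ _ hi]
  rw [harg] at h
  rw [h, Finset.prod_const]

noncomputable def Qcomp {E F : Type*} [NormedAddCommGroup E] [NormedSpace ℝ E]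
    [NormedAddCommGroup F] [NormedSpace ℝ F] {k : ℕ}
    (f : MultilinearMap ℝ (fun _ : Fin k => E) F) (a : E) (j : ℕ) (x : E) : F :=
  ∑ s ∈ (Finset.univ : Finset (Fin k)).powersetCard (k - j),
    f (s.piecewise (fun _ => a) (fun _ => x))

lemma Qcomp_expand {E F : Type*} [NormedAddCommGroup E] [NormedSpace ℝ E]
    [NormedAddCommGroup F] [NormedSpace ℝ F] {k : ℕ}
    (f : MultilinearMap ℝ (fun _ : Fin k => E) F) (a x : E) (t : ℝ) :
    f (fun _ => a + t • x) = ∑ j ∈ Finset.range (k + 1), t ^ j • Qcomp f a j x := by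
  classical
  have h1 : (fun _ : Fin k => a + t • x)
      = (fun _ : Fin k => a) + (fun _ : Fin k => t • x) := rfl
  rw [h1, f.map_add_univ]
  have h2 : ∑ s : Finset (Fin k), f (s.piecewise (fun _ => a) (fun _ => t • x))
      = ∑ s ∈ (Finset.univ : Finset (Finset (Fin k))),
          f (s.piecewise (fun _ => a) (fun _ => t • x)) := rfl
  rw [h2, ← Finset.powerset_univ, Finset.sum_powerset]
  have h3 : ∀ m ∈ Finset.range (#(Finset.univ : Finset (Fin k)) + 1),
      ∑ s ∈ (Finset.univ : Finset (Fin k)).powersetCard m,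
        f (s.piecewise (fun _ => a) (fun _ => t • x))
      = t ^ (k - m) • Qcomp f a (k - m) x := by
    intro m hm
    rw [Finset.mem_range, Finset.card_univ, Fintype.card_fin] at hm
    have hmk : m ≤ k := Nat.lt_succ_iff.mp hm
    rw [Qcomp, Finset.smul_sum, Nat.sub_sub_self hmk]
    apply Finset.sum_congr rfl
    intro s hs
    rw [Finset.mem_powersetCard] at hs
    have hcard : sᶜ.card = k - m := by
      rw [Finset.card_compl, Fintype.card_fin, hs.2]
    rw [piecewise_smul_apply, hcard]
  rw [Finset.sum_congr rfl h3, Finset.card_univ, Fintype.card_fin]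
  exact Finset.sum_range_reflect (fun j => t ^ j • Qcomp f a j x) (k + 1)

lemma Qcomp_homog {E F : Type*} [NormedAddCommGroup E] [NormedSpace ℝ E]
    [NormedAddCommGroup F] [NormedSpace ℝ F] {k : ℕ}
    (f : MultilinearMap ℝ (fun _ : Fin k => E) F) (a : E) {j : ℕ} (hj : j ≤ k)
    (c : ℝ) (x : E) : Qcomp f a j (c • x) = c ^ j • Qcomp f a j x := by
  classical
  rw [Qcomp, Qcomp, Finset.smul_sum]
  apply Finset.sum_congr rfl
  intro s hs
  rw [Finset.mem_powersetCard] at hs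
  have hcard : sᶜ.card = j := by
    rw [Finset.card_compl, Fintype.card_fin, hs.2, Nat.sub_sub_self hj]
  rw [piecewise_smul_apply, hcard]

lemma Qcomp_zero {E F : Type*} [NormedAddCommGroup E] [NormedSpace ℝ E]
    [NormedAddCommGroup F] [NormedSpace ℝ F] {k : ℕ}
    (f : MultilinearMap ℝ (fun _ : Fin k => E) F) (a x : E) :
    Qcomp f a 0 x = f (fun _ => a) := by
  classical
  rw [Qcomp, Nat.sub_zero]
  have : (Finset.univ : Finset (Fin k)).powersetCard k = {Finset.univ} := by
    have := Finset.powersetCard_self (Finset.univ : Finset (Fin k))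
    rwa [Finset.card_univ, Fintype.card_fin] at this
  rw [this, Finset.sum_singleton, Finset.piecewise_univ]

lemma weighted_bound {F : Type*} [NormedAddCommGroup F] [NormedSpace ℝ F]
    {ι : Type*} [Fintype ι] (w : ι → ℝ) (v : ι → F) {B : ℝ}
    (hv : ∀ i, ‖v i‖ ≤ B) : ‖∑ i, w i • v i‖ ≤ (∑ i, |w i|) * B := by
  calc ‖∑ i, w i • v i‖ ≤ ∑ i, ‖w i • v i‖ := norm_sum_le _ _
    _ = ∑ i, |w i| * ‖v i‖ := by simp [norm_smul, Real.norm_eq_abs]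
    _ ≤ ∑ i, |w i| * B :=
        Finset.sum_le_sum fun i _ => mul_le_mul_of_nonneg_left (hv i) (abs_nonneg _)
    _ = (∑ i, |w i|) * B := (Finset.sum_mul _ _ _).symm

/-- A polynomial of degree at most `n` between normed spaces that is continuous at `0`
is continuous everywhere. -/
theorem stmt_2
    {E F : Type*} [NormedAddCommGroup E] [NormedSpace ℝ E]
    [NormedAddCommGroup F] [NormedSpace ℝ F]
    (n : ℕ) (P : E → F)
    (L : ∀ k : ℕ, MultilinearMap ℝ (fun _ : Fin k => E) F)
    (hsym : ∀ (k : ℕ) (σ : Equiv.Perm (Fin k)) (v : Fin k → E),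
      L k (fun i => v (σ i)) = L k v)
    (hP : ∀ x : E, P x = ∑ k ∈ Finset.range (n + 1), L k (fun _ => x))
    (h0 : ContinuousAt P 0) :
    Continuous P := by
  classical
  set p : ℕ → E → F := fun k x => L k (fun _ => x) with hpdef
  -- homogeneity of the components
  have hphomog : ∀ (k : ℕ) (c : ℝ) (x : E), p k (c • x) = c ^ k • p k x := by
    intro k c x
    have h := (L k).map_smul_univ (fun _ => c) (fun _ => x)
    simpa [hpdef] using h
  -- expansion of `P` along rays
  have hPt : ∀ (t : ℝ) (x : E),
      P (t • x) = ∑ m : Fin (n+1), (t ^ (m : ℕ)) • p (m : ℕ) x := by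
    intro t x
    rw [hP, ← Fin.sum_univ_eq_sum_range (fun k => L k (fun _ => t • x))]
    exact Finset.sum_congr rfl fun m _ => hphomog (m : ℕ) t x
  -- `P` is bounded near `0`
  obtain ⟨δ, hδ, hMP⟩ : ∃ δ > 0, ∀ y : E, ‖y‖ ≤ δ → ‖P y‖ ≤ ‖P 0‖ + 1 := by
    have h := h0 (Metric.closedBall_mem_nhds (P 0) one_pos)
    rw [Filter.mem_map, Metric.mem_nhds_iff] at h
    obtain ⟨ε, hε, hsub⟩ := h
    refine ⟨ε/2, by positivity, fun y hy => ?_⟩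
    have hmem : y ∈ Metric.ball (0:E) ε := by
      rw [Metric.mem_ball, dist_zero_right]; linarith
    have h2 := hsub hmem
    rw [Set.mem_preimage, Metric.mem_closedBall, dist_eq_norm] at h2
    calc ‖P y‖ = ‖(P y - P 0) + P 0‖ := by rw [sub_add_cancel]
      _ ≤ ‖P y - P 0‖ + ‖P 0‖ := norm_add_le _ _
      _ ≤ ‖P 0‖ + 1 := by linarith
  -- interpolation for the components
  have hPinterp : ∀ (k : Fin (n+1)) (x : E),
      p (k : ℕ) x = ∑ i : Fin (n+1), interpW n k i • P ((((i:ℕ)):ℝ) • x) := by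
    intro k x
    have h := interpW_spec n (fun m : Fin (n+1) => p (m : ℕ) x) k
    rw [h]
    exact Finset.sum_congr rfl fun i _ => by rw [hPt]
  -- components bounded near `0`
  set r : ℝ := δ / (n + 1) with hrdef
  have hr : (0:ℝ) < r := by positivity
  have hpbdd : ∀ k : Fin (n+1), ∀ x : E, ‖x‖ ≤ r →
      ‖p (k : ℕ) x‖ ≤ (∑ i : Fin (n+1), |interpW n k i|) * (‖P 0‖ + 1) := by
    intro k x hx
    rw [hPinterp k x]
    refine weighted_bound _ _ fun i => hMP _ ?_
    have hi : ((i:ℕ):ℝ) ≤ (n:ℝ) := by exact_mod_cast Fin.is_le i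
    have hi0 : (0:ℝ) ≤ ((i:ℕ):ℝ) := Nat.cast_nonneg _
    have hnx : (0:ℝ) ≤ ‖x‖ := norm_nonneg _
    have key : (n:ℝ) * r ≤ δ := by
      rw [hrdef]
      rw [div_eq_mul_inv, ← mul_assoc]
      rw [mul_comm]
      have hn1 : (0:ℝ) < (n:ℝ) + 1 := by positivity
      rw [← mul_assoc, inv_mul_eq_div, div_mul_eq_mul_div, div_le_iff₀ hn1]
      nlinarith [hδ]
    calc ‖(((i:ℕ)):ℝ) • x‖ = ((i:ℕ):ℝ) * ‖x‖ := by
          rw [norm_smul, Real.norm_eq_abs, abs_of_nonneg hi0]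
      _ ≤ (n:ℝ) * r := by
          apply mul_le_mul hi hx hnx (Nat.cast_nonneg n)
      _ ≤ δ := key
  -- each component is continuous
  have hcont : ∀ k : Fin (n+1), Continuous (p (k : ℕ)) := by
    intro k
    rw [continuous_iff_continuousAt]
    intro a
    set kk : ℕ := (k : ℕ) with hkk
    set M₁ : ℝ := (∑ i : Fin (n+1), |interpW n k i|) * (‖P 0‖ + 1) with hM₁
    set R : ℝ := ‖a‖ + (kk : ℝ) with hR
    have hR0 : 0 ≤ R := by positivity
    set B : ℝ := (1 + R / r) ^ kk * M₁ with hB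
    have hglobal : ∀ y : E, ‖y‖ ≤ R → ‖p kk y‖ ≤ B :=
      homog_bound (p kk) kk (hphomog kk) hr (hpbdd k) R
    -- interpolation for `Qcomp`
    have hQint : ∀ (j : Fin (kk+1)) (x : E),
        Qcomp (L kk) a (j : ℕ) x
          = ∑ i : Fin (kk+1), interpW kk j i • p kk (a + (((i:ℕ)):ℝ) • x) := by
      intro j x
      have hf : ∀ i : Fin (kk+1), p kk (a + (((i:ℕ)):ℝ) • x)
          = ∑ m : Fin (kk+1), ((((i:ℕ)):ℝ) ^ (m : ℕ)) • Qcomp (L kk) a (m : ℕ) x := by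
        intro i
        have h := Qcomp_expand (L kk) a x (((i:ℕ)):ℝ)
        rw [← Fin.sum_univ_eq_sum_range
          (fun j => ((((i:ℕ)):ℝ)) ^ j • Qcomp (L kk) a j x) (kk+1)] at h
        exact h
      have h := interpW_spec kk (fun m : Fin (kk+1) => Qcomp (L kk) a (m : ℕ) x) j
      rw [h]
      exact Finset.sum_congr rfl fun i _ => by rw [← hf i]
    -- bound for `Qcomp` on the unit ball
    have hQbdd : ∀ (j : Fin (kk+1)) (x : E), ‖x‖ ≤ 1 →
        ‖Qcomp (L kk) a (j : ℕ) x‖ ≤ (∑ i : Fin (kk+1), |interpW kk j i|) * B := by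
      intro j x hx
      rw [hQint j x]
      refine weighted_bound _ _ fun i => hglobal _ ?_
      have hi : ((i:ℕ):ℝ) ≤ (kk:ℝ) := by exact_mod_cast Fin.is_le i
      have hi0 : (0:ℝ) ≤ ((i:ℕ):ℝ) := Nat.cast_nonneg _
      calc ‖a + (((i:ℕ)):ℝ) • x‖ ≤ ‖a‖ + ‖(((i:ℕ)):ℝ) • x‖ := norm_add_le _ _
        _ ≤ ‖a‖ + (kk:ℝ) := by
            have : ‖(((i:ℕ)):ℝ) • x‖ = ((i:ℕ):ℝ) * ‖x‖ := by
              rw [norm_smul, Real.norm_eq_abs, abs_of_nonneg hi0]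
            rw [this]
            have : ((i:ℕ):ℝ) * ‖x‖ ≤ (kk:ℝ) * 1 :=
              mul_le_mul hi hx (norm_nonneg _) (Nat.cast_nonneg _)
            linarith
        _ = R := hR.symm
    -- `Qcomp` terms of positive degree tend to `0`
    have hQtend : ∀ j : ℕ, 1 ≤ j → j ≤ kk →
        Tendsto (Qcomp (L kk) a j) (𝓝 0) (𝓝 0) := by
      intro j hj1 hjk
      have hjfin : j < kk + 1 := Nat.lt_succ_of_le hjk
      exact homog_tendsto (Qcomp (L kk) a j) j hj1
        (fun c x => Qcomp_homog (L kk) a hjk c x)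
        (fun x hx => by
          have := hQbdd ⟨j, hjfin⟩ x hx
          simpa using this)
    -- expansion around `a`
    have key : ∀ y : E, p kk y = ∑ j ∈ Finset.range (kk+1), Qcomp (L kk) a j (y - a) := by
      intro y
      have h := Qcomp_expand (L kk) a (y - a) 1
      simp only [one_smul, one_pow, add_sub_cancel] at h
      simpa [hpdef] using h
    -- assemble the limit
    have hsub : Tendsto (fun y : E => y - a) (𝓝 a) (𝓝 0) := by
      have : Tendsto (fun y : E => y - a) (𝓝 a) (𝓝 (a - a)) :=
        (continuous_id.sub (continuous_const (y := a))).tendsto a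
      simpa using this
    have hlim : Tendsto (fun y : E => ∑ j ∈ Finset.range (kk+1), Qcomp (L kk) a j (y - a))
        (𝓝 a) (𝓝 (∑ j ∈ Finset.range (kk+1), if j = 0 then p kk a else 0)) := by
      refine tendsto_finset_sum _ fun j hj => ?_
      rw [Finset.mem_range] at hj
      rcases Nat.eq_zero_or_pos j with rfl | hjpos
      · simp only [if_pos rfl]
        have hconst : (fun y : E => Qcomp (L kk) a 0 (y - a)) = fun _ => p kk a := by
          funext y
          rw [Qcomp_zero]
        rw [hconst]
        exact tendsto_const_nhds
      · simp only [if_neg (Nat.pos_iff_ne_zero.mp hjpos)]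
        exact (hQtend j hjpos (Nat.lt_succ_iff.mp hj)).comp hsub
    have hsum : (∑ j ∈ Finset.range (kk+1), if j = 0 then p kk a else 0) = p kk a := by
      rw [Finset.sum_ite_eq' (Finset.range (kk+1)) 0 (fun _ => p kk a)]
      simp
    rw [hsum] at hlim
    exact hlim.congr fun y => (key y).symm
  -- conclude
  have hPfun : P = fun x => ∑ k ∈ Finset.range (n+1), p k x := funext hP
  rw [hPfun]
  apply continuous_finset_sum
  intro k hk
  rw [Finset.mem_range] at hk
  exact hcont ⟨k, hk⟩
end

section
/- Let E be a real normed space and L : E → ℝ a linear functional (not assumed continuous). If L maps every connected subset of E to a connected subset of ℝ, then L is continuous. -/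
/-- A linear functional on a real normed space mapping connected sets to connected
sets is continuous. -/
theorem stmt_4
    {E : Type*} [NormedAddCommGroup E] [NormedSpace ℝ E]
    (L : E →ₗ[ℝ] ℝ)
    (hconn : ∀ C : Set E, IsConnected C → IsConnected (L '' C)) :
    Continuous L := by
  by_contra hc
  -- L is unbounded
  have hub : ∀ n : ℕ, ∃ y : E, ((n : ℝ) + 1) * ‖y‖ < ‖L y‖ := by
    by_contra h
    push_neg at h
    obtain ⟨n, hn⟩ := h
    exact hc (AddMonoidHomClass.continuous_of_bound L ((n : ℝ) + 1) fun x => hn x)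
  -- pick x n with L (x n) = 1, ‖x n‖ < 1/(n+1)
  have key : ∀ n : ℕ, ∃ x : E, L x = 1 ∧ ‖x‖ < 1 / ((n : ℝ) + 1) := by
    intro n
    obtain ⟨y, hy⟩ := hub n
    have hy0 : ‖L y‖ > 0 := lt_of_le_of_lt (by positivity) hy
    have hLy : L y ≠ 0 := by
      intro h; rw [h] at hy0; simp at hy0
    refine ⟨(L y)⁻¹ • y, by simp [hLy], ?_⟩
    rw [norm_smul, norm_inv]
    rw [inv_mul_lt_iff₀ hy0, mul_one_div, lt_div_iff₀ (by positivity), mul_comm]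
    exact hy
  choose x hx1 hx2 using key
  -- the chain of segments
  set seg : ℕ → Set E := fun n => segment ℝ (x n) (x (n + 1)) with hseg
  set S : ℕ → Set E := fun n => Nat.rec (seg 0) (fun k Sk => Sk ∪ seg (k + 1)) n with hS
  have hSsucc : ∀ n, S (n + 1) = S n ∪ seg (n + 1) := fun n => rfl
  have hSmem : ∀ n, IsPreconnected (S n) ∧ x (n + 1) ∈ S n ∧ x 0 ∈ S n := by
    intro n
    induction n with
    | zero => exact ⟨(convex_segment _ _).isPreconnected, right_mem_segment _ _ _,
        left_mem_segment _ _ _⟩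
    | succ k ih =>
      rw [hSsucc]
      refine ⟨ih.1.union (x (k + 1)) ih.2.1 (left_mem_segment _ _ _)
        (convex_segment _ _).isPreconnected, Or.inr (right_mem_segment _ _ _),
        Or.inl ih.2.2⟩
  have hSseg : ∀ n, ∀ y ∈ S n, ∃ k, y ∈ seg k := by
    intro n
    induction n with
    | zero => exact fun y hy => ⟨0, hy⟩
    | succ k ih =>
      rw [hSsucc]
      rintro y (hy | hy)
      · exact ih y hy
      · exact ⟨k + 1, hy⟩
  set P : Set E := ⋃ n, S n with hP
  have hPpre : IsPreconnected P :=
    isPreconnected_iUnion ⟨x 0, Set.mem_iInter.2 fun n => (hSmem n).2.2⟩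
      fun n => (hSmem n).1
  have hxP : ∀ n, x n ∈ P := by
    intro n
    cases n with
    | zero => exact Set.mem_iUnion.2 ⟨0, (hSmem 0).2.2⟩
    | succ k => exact Set.mem_iUnion.2 ⟨k, (hSmem k).2.1⟩
  -- 0 is in closure of P
  have hx0 : Filter.Tendsto x Filter.atTop (nhds 0) := by
    rw [tendsto_iff_norm_sub_tendsto_zero]
    apply squeeze_zero (g := fun n : ℕ => 1 / ((n : ℝ) + 1)) (fun n => norm_nonneg _)
      (fun n => by simpa using (hx2 n).le)
    exact tendsto_one_div_add_atTop_nhds_zero_nat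
  have h0cl : (0 : E) ∈ closure P :=
    mem_closure_of_tendsto hx0 (Filter.Eventually.of_forall hxP)
  set C : Set E := insert 0 P with hC
  have hCconn : IsConnected C := by
    refine ⟨⟨0, Set.mem_insert _ _⟩, hPpre.subset_closure (Set.subset_insert _ _) ?_⟩
    intro y hy
    rcases hy with rfl | hy
    · exact h0cl
    · exact subset_closure hy
  have himg := hconn C hCconn
  -- the image is {0, 1}
  have h0 : (0 : ℝ) ∈ L '' C := ⟨0, Set.mem_insert _ _, by simp⟩
  have h1 : (1 : ℝ) ∈ L '' C := ⟨x 0, Set.mem_insert_of_mem _ (hxP 0), hx1 0⟩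
  have hsub : L '' C ⊆ {0, 1} := by
    rintro - ⟨y, hy, rfl⟩
    rcases hy with rfl | hy
    · exact Or.inl (by simp)
    · obtain ⟨n, hn⟩ := Set.mem_iUnion.1 hy
      obtain ⟨k, hk⟩ := hSseg n y hn
      obtain ⟨a, b, _, _, hab, rfl⟩ := hk
      right
      simp [map_add, map_smul, hx1, smul_eq_mul]
      linarith
  have hhalf : (1/2 : ℝ) ∈ L '' C :=
    himg.isPreconnected.Icc_subset h0 h1 (by norm_num)
  rcases hsub hhalf with h | h <;> norm_num at h
end

section
/- Let E be a real normed space, L : E × E → ℝ a symmetric bilinear form (not assumed continuous), and P(x) = L(x,x) the associated 2-homogeneous polynomial. If P maps every connected subset of E to a connected subset of ℝ, then P is continuous. -/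
section Aux

variable {E : Type*} [NormedAddCommGroup E] [NormedSpace ℝ E]

private lemma seg_bound (L : E →ₗ[ℝ] E →ₗ[ℝ] ℝ) (hsym : ∀ x y : E, L x y = L y x)
    {u v : E} (hu : 1 ≤ L u u) (hv : 1 ≤ L v v) (huv : 1 ≤ L u v)
    {x : E} (hx : x ∈ segment ℝ u v) : 1 ≤ L x x := by
  obtain ⟨a, b, ha, hb, hab, rfl⟩ := hx
  have h1 : L (a • u + b • v) (a • u + b • v)
      = a*a*(L u u) + 2*(a*b)*(L u v) + b*b*(L v v) := by
    simp only [map_add, map_smul, LinearMap.add_apply, LinearMap.smul_apply, smul_eq_mul,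
      hsym v u]
    ring
  rw [h1]
  nlinarith [mul_nonneg ha hb, mul_nonneg ha ha, mul_nonneg hb hb,
    mul_le_mul_of_nonneg_left hu (mul_nonneg ha ha),
    mul_le_mul_of_nonneg_left hv (mul_nonneg hb hb),
    mul_le_mul_of_nonneg_left huv (mul_nonneg ha hb)]

private lemma connect (L : E →ₗ[ℝ] E →ₗ[ℝ] ℝ) (hsym : ∀ x y : E, L x y = L y x)
    {u v : E} (hu : L u u = 1) (hv : L v v = 1) :
    ∃ (w : E) (v' : E), L v' v' = 1 ∧ ‖v'‖ = ‖v‖ ∧ 1 ≤ L w w ∧ 1 ≤ L u w ∧ 1 ≤ L w v' := by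
  have hvu : L v u = L u v := hsym v u
  rcases le_or_gt 1 (L u v) with h1 | h1
  · exact ⟨v, v, hv, rfl, hv.ge, h1, hv.ge⟩
  rcases le_or_gt (L u v) (-1) with h2 | h2
  · have e1 : L (-v) (-v) = L v v := by simp
    have e2 : L u (-v) = -(L u v) := by simp
    exact ⟨-v, -v, by rw [e1, hv], norm_neg v, by rw [e1, hv], by rw [e2]; linarith,
      by rw [e1, hv]⟩
  · -- -1 < L u v < 1, use a bridge
    have hpos : (0:ℝ) < 1 + L u v := by linarith
    have hd2 : 1 + L u v < 2 := by linarith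
    refine ⟨(2/(1 + L u v)) • (u + v), v, hv, rfl, ?_, ?_, ?_⟩
    · have e : L ((2/(1 + L u v)) • (u + v)) ((2/(1 + L u v)) • (u + v))
          = (2/(1 + L u v)) * (2/(1 + L u v)) * (L u u + L u v + (L v u + L v v)) := by
        simp only [map_add, map_smul, LinearMap.add_apply, LinearMap.smul_apply, smul_eq_mul]
        ring
      rw [e, hu, hv, hvu]
      have e2 : (2/(1 + L u v)) * (2/(1 + L u v)) * (1 + L u v + (L u v + 1))
          = 8/(1 + L u v) := by
        field_simp
        ring
      rw [e2, le_div_iff₀ hpos]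
      linarith
    · have e : L u ((2/(1 + L u v)) • (u + v)) = (2/(1 + L u v)) * (L u u + L u v) := by
        simp only [map_add, map_smul, smul_eq_mul]
      rw [e, hu]
      have e2 : (2/(1 + L u v)) * (1 + L u v) = 2 := div_mul_cancel₀ 2 hpos.ne'
      rw [e2]
      norm_num
    · have e : L ((2/(1 + L u v)) • (u + v)) v = (2/(1 + L u v)) * (L u v + L v v) := by
        simp only [map_add, map_smul, LinearMap.add_apply, LinearMap.smul_apply, smul_eq_mul]
      rw [e, hv]
      have e2 : (2/(1 + L u v)) * (L u v + 1) = 2 := by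
        rw [show L u v + 1 = 1 + L u v by ring]
        exact div_mul_cancel₀ 2 hpos.ne'
      rw [e2]
      norm_num

private lemma main_aux (L : E →ₗ[ℝ] E →ₗ[ℝ] ℝ) (hsym : ∀ x y : E, L x y = L y x)
    (hconn : ∀ C : Set E, IsConnected C → IsConnected ((fun x => L x x) '' C))
    (hsmall : ∀ ε : ℝ, 0 < ε → ∃ x : E, ‖x‖ ≤ ε ∧ L x x = 1) : False := by
  classical
  have hy : ∀ n : ℕ, ∃ x : E, ‖x‖ ≤ 1/(n+1) ∧ L x x = 1 := by
    intro n
    exact hsmall (1/(n+1)) (by positivity)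
  choose y hy1 hy2 using hy
  have hcon : ∀ u v : {x : E // L x x = 1},
      ∃ (w : E) (v' : {x : E // L x x = 1}), ‖(v' : E)‖ = ‖(v : E)‖ ∧
        1 ≤ L w w ∧ 1 ≤ L (u : E) w ∧ 1 ≤ L w (v' : E) := by
    rintro ⟨u, hu⟩ ⟨v, hv⟩
    obtain ⟨w, v', hv', hn, h1, h2, h3⟩ := connect L hsym hu hv
    exact ⟨w, ⟨v', hv'⟩, hn, h1, h2, h3⟩
  choose W V hVn hW1 hW2 hW3 using hcon
  set yT : ℕ → {x : E // L x x = 1} := fun n => ⟨y n, hy2 n⟩ with hyT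
  set s : ℕ → {x : E // L x x = 1} :=
    fun n => Nat.rec (yT 0) (fun n sn => V sn (yT (n+1))) n with hs
  have hssucc : ∀ n, s (n+1) = V (s n) (yT (n+1)) := fun n => rfl
  have hsnorm : ∀ n, ‖(s n : E)‖ ≤ 1/(n+1) := by
    intro n
    cases n with
    | zero => exact hy1 0
    | succ m =>
      rw [hssucc m, hVn (s m) (yT (m+1))]
      exact hy1 (m+1)
  set w : ℕ → E := fun n => W (s n) (yT (n+1)) with hw
  set K : ℕ → Set E := fun n =>
    segment ℝ (s n : E) (w n) ∪ segment ℝ (w n) (s (n+1) : E) with hK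
  have hKpre : ∀ n, IsPreconnected (K n) := by
    intro n
    exact IsPreconnected.union (w n) (right_mem_segment ℝ _ _) (left_mem_segment ℝ _ _)
      (convex_segment _ _).isPreconnected (convex_segment _ _).isPreconnected
  have hKchain : ∀ n, (K n ∩ K (n+1)).Nonempty := by
    intro n
    exact ⟨(s (n+1) : E), Or.inr (right_mem_segment ℝ _ _),
      Or.inl (left_mem_segment ℝ _ _)⟩
  set U : Set E := ⋃ n, K n with hU
  have hUpre : IsPreconnected U := IsPreconnected.iUnion_of_chain hKpre hKchain
  have hs0U : (s 0 : E) ∈ U := Set.mem_iUnion.2 ⟨0, Or.inl (left_mem_segment ℝ _ _)⟩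
  have hUconn : IsConnected U := ⟨⟨_, hs0U⟩, hUpre⟩
  have hUge : ∀ x ∈ U, 1 ≤ L x x := by
    intro x hx
    obtain ⟨n, hn⟩ := Set.mem_iUnion.1 hx
    rcases hn with h | h
    · exact seg_bound L hsym (le_of_eq (s n).2.symm) (hW1 (s n) (yT (n+1)))
        (hW2 (s n) (yT (n+1))) h
    · have h3 := hW3 (s n) (yT (n+1))
      rw [← hssucc n] at h3
      exact seg_bound L hsym (hW1 (s n) (yT (n+1))) (le_of_eq (s (n+1)).2.symm) h3 h
  set C : Set E := insert (0 : E) U with hCdef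
  have h0cl : (0 : E) ∈ closure U := by
    rw [Metric.mem_closure_iff]
    intro ε hε
    obtain ⟨n, hn⟩ := exists_nat_one_div_lt (K := ℝ) hε
    refine ⟨(s n : E), Set.mem_iUnion.2 ⟨n, Or.inl (left_mem_segment ℝ _ _)⟩, ?_⟩
    rw [dist_comm, dist_zero_right]
    calc ‖(s n : E)‖ ≤ 1/(n+1) := hsnorm n
      _ < ε := hn
  have hCconn : IsConnected C :=
    hUconn.subset_closure (Set.subset_insert _ _)
      (by
        rintro x (rfl | hx)
        · exact h0cl
        · exact subset_closure hx)
  have himg := hconn C hCconn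
  have h0 : (0:ℝ) ∈ (fun x => L x x) '' C :=
    ⟨0, Set.mem_insert _ _, by simp⟩
  have h1 : (1:ℝ) ∈ (fun x => L x x) '' C :=
    ⟨(s 0 : E), Set.mem_insert_of_mem _ hs0U, (s 0).2⟩
  have hhalf : (1/2 : ℝ) ∈ (fun x => L x x) '' C :=
    himg.isPreconnected.Icc_subset h0 h1 (by norm_num)
  obtain ⟨x, hxC, hx⟩ := hhalf
  rcases hxC with rfl | hxU
  · simp at hx
  · have hx' : L x x = 1/2 := hx
    have := hUge x hxU
    rw [hx'] at this
    norm_num at this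

end Aux

/-- If the 2-homogeneous polynomial associated to a symmetric bilinear form on a real
normed space maps connected sets to connected sets, then it is continuous. -/
theorem stmt_5
    {E : Type*} [NormedAddCommGroup E] [NormedSpace ℝ E]
    (L : E →ₗ[ℝ] E →ₗ[ℝ] ℝ)
    (hsym : ∀ x y : E, L x y = L y x)
    (P : E → ℝ) (hP : ∀ x, P x = L x x)
    (hconn : ∀ C : Set E, IsConnected C → IsConnected (P '' C)) :
    Continuous P := by
  have hPfun : P = fun x => L x x := funext hP
  subst hPfun
  by_cases hb : ∃ M : ℝ, ∀ x : E, ‖x‖ ≤ 1 → |L x x| ≤ M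
  · -- bounded case : continuity
    obtain ⟨M, hM⟩ := hb
    have hM0 : 0 ≤ M := by
      have := hM 0 (by simp)
      simpa using this
    -- quadratic bound
    have hquad : ∀ x : E, |L x x| ≤ M * ‖x‖^2 := by
      intro x
      rcases eq_or_ne x 0 with rfl | hx
      · simp
      · have hxn : (0:ℝ) < ‖x‖ := norm_pos_iff.2 hx
        have hLu : L (‖x‖⁻¹ • x) (‖x‖⁻¹ • x) = ‖x‖⁻¹ * (‖x‖⁻¹ * L x x) := by
          simp only [map_smul, LinearMap.smul_apply, smul_eq_mul]
        have hun : ‖(‖x‖⁻¹ • x)‖ = 1 := by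
          rw [norm_smul, norm_inv, norm_norm, inv_mul_cancel₀ hxn.ne']
        have h1 := hM (‖x‖⁻¹ • x) hun.le
        rw [hLu] at h1
        simp only [abs_mul, abs_inv, abs_norm] at h1
        calc |L x x| = ‖x‖ * (‖x‖ * (‖x‖⁻¹ * (‖x‖⁻¹ * |L x x|))) := by
              field_simp
          _ ≤ ‖x‖ * (‖x‖ * M) :=
              mul_le_mul_of_nonneg_left (mul_le_mul_of_nonneg_left h1 hxn.le) hxn.le
          _ = M * ‖x‖^2 := by ring
    -- bilinear bound on unit ball via polarization
    have hpol : ∀ a b : E, ‖a‖ ≤ 1 → ‖b‖ ≤ 1 → |L a b| ≤ 2 * M := by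
      intro a b ha hb'
      have hid : L a b = (L (a+b) (a+b) - L (a-b) (a-b)) / 4 := by
        have hba : L b a = L a b := hsym b a
        simp only [map_add, map_sub, LinearMap.add_apply, LinearMap.sub_apply, hba]
        ring
      have hsum : ‖a + b‖^2 ≤ 4 := by
        have h : ‖a + b‖ ≤ 2 := (norm_add_le a b).trans (by linarith)
        nlinarith [norm_nonneg (a+b)]
      have hdiff : ‖a - b‖^2 ≤ 4 := by
        have h : ‖a - b‖ ≤ 2 := (norm_sub_le a b).trans (by linarith)
        nlinarith [norm_nonneg (a-b)]
      have h1 : |L (a+b) (a+b)| ≤ M * 4 :=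
        (hquad _).trans (mul_le_mul_of_nonneg_left hsum hM0)
      have h2 : |L (a-b) (a-b)| ≤ M * 4 :=
        (hquad _).trans (mul_le_mul_of_nonneg_left hdiff hM0)
      have habs : |L (a+b) (a+b) - L (a-b) (a-b)| ≤ M * 4 + M * 4 :=
        (abs_sub _ _).trans (by linarith)
      rw [hid, abs_div, abs_of_pos (by norm_num : (0:ℝ) < 4)]
      linarith
    -- full bilinear bound
    have hbil : ∀ a b : E, |L a b| ≤ 2 * M * (‖a‖ * ‖b‖) := by
      intro a b
      rcases eq_or_ne a 0 with rfl | ha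
      · simp
      rcases eq_or_ne b 0 with rfl | hb'
      · simp
      have hna : (0:ℝ) < ‖a‖ := norm_pos_iff.2 ha
      have hnb : (0:ℝ) < ‖b‖ := norm_pos_iff.2 hb'
      have e : L (‖a‖⁻¹ • a) (‖b‖⁻¹ • b) = ‖b‖⁻¹ * (‖a‖⁻¹ * L a b) := by
        simp only [map_smul, LinearMap.smul_apply, smul_eq_mul]
      have h1 : |L (‖a‖⁻¹ • a) (‖b‖⁻¹ • b)| ≤ 2 * M := by
        apply hpol
        · rw [norm_smul, norm_inv, norm_norm, inv_mul_cancel₀ hna.ne']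
        · rw [norm_smul, norm_inv, norm_norm, inv_mul_cancel₀ hnb.ne']
      rw [e] at h1
      simp only [abs_mul, abs_inv, abs_norm] at h1
      calc |L a b| = ‖b‖ * (‖a‖ * (‖b‖⁻¹ * (‖a‖⁻¹ * |L a b|))) := by
            field_simp
        _ ≤ ‖b‖ * (‖a‖ * (2 * M)) :=
            mul_le_mul_of_nonneg_left (mul_le_mul_of_nonneg_left h1 hna.le) hnb.le
        _ = 2 * M * (‖a‖ * ‖b‖) := by ring
    -- continuity
    rw [continuous_iff_continuousAt]
    intro x₀
    rw [ContinuousAt, tendsto_iff_dist_tendsto_zero]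
    have hle : ∀ x : E, dist (L x x) (L x₀ x₀) ≤ 2 * M * (dist x x₀ * (‖x‖ + ‖x₀‖)) := by
      intro x
      have hid : L x x - L x₀ x₀ = L (x - x₀) (x + x₀) := by
        have h := hsym x₀ x
        simp only [map_add, map_sub, LinearMap.add_apply, LinearMap.sub_apply, h]
        ring
      rw [Real.dist_eq, hid]
      calc |L (x - x₀) (x + x₀)| ≤ 2 * M * (‖x - x₀‖ * ‖x + x₀‖) := hbil _ _
        _ ≤ 2 * M * (‖x - x₀‖ * (‖x‖ + ‖x₀‖)) := by
            apply mul_le_mul_of_nonneg_left _ (by positivity)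
            exact mul_le_mul_of_nonneg_left (norm_add_le _ _) (norm_nonneg _)
        _ = 2 * M * (dist x x₀ * (‖x‖ + ‖x₀‖)) := by rw [dist_eq_norm]
    have hg : Filter.Tendsto (fun x : E => 2 * M * (dist x x₀ * (‖x‖ + ‖x₀‖)))
        (nhds x₀) (nhds 0) := by
      have hc : Continuous (fun x : E => 2 * M * (dist x x₀ * (‖x‖ + ‖x₀‖))) := by
        continuity
      have h := hc.continuousAt (x := x₀)
      simpa [ContinuousAt] using h
    exact squeeze_zero (fun x => dist_nonneg) hle hg
  · -- unbounded case : contradiction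
    exfalso
    push_neg at hb
    have hsmall : ∀ ε : ℝ, 0 < ε → ∃ x : E, ‖x‖ ≤ ε ∧ |L x x| = 1 := by
      intro ε hε
      obtain ⟨x, hx1, hx2⟩ := hb (ε⁻¹ * ε⁻¹)
      have hApos : 0 < |L x x| := lt_of_le_of_lt (by positivity) hx2
      have hsq : (0:ℝ) < Real.sqrt |L x x| := Real.sqrt_pos.2 hApos
      set r : ℝ := (Real.sqrt |L x x|)⁻¹ with hr
      have hrpos : 0 < r := by positivity
      have h5 : ε⁻¹ < Real.sqrt |L x x| := by
        have := Real.sqrt_lt_sqrt (by positivity : (0:ℝ) ≤ ε⁻¹ * ε⁻¹) hx2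
        rwa [Real.sqrt_mul_self (by positivity : (0:ℝ) ≤ ε⁻¹)] at this
      have h4 : r * Real.sqrt |L x x| = 1 := inv_mul_cancel₀ hsq.ne'
      have h7 : r * ε⁻¹ < 1 := by nlinarith [mul_pos hrpos (sub_pos.2 h5)]
      have hrε : r < ε := by
        calc r = r * ε⁻¹ * ε := by field_simp
          _ < 1 * ε := mul_lt_mul_of_pos_right h7 hε
          _ = ε := one_mul ε
      refine ⟨r • x, ?_, ?_⟩
      · have hn : ‖r • x‖ = r * ‖x‖ := by
          rw [norm_smul, Real.norm_eq_abs, abs_of_pos hrpos]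
        rw [hn]
        calc r * ‖x‖ ≤ r * 1 := mul_le_mul_of_nonneg_left hx1 hrpos.le
          _ = r := mul_one r
          _ ≤ ε := hrε.le
      · have e : L (r • x) (r • x) = r * (r * L x x) := by
          simp only [map_smul, LinearMap.smul_apply, smul_eq_mul]
        have hrr : r * r = |L x x|⁻¹ := by
          rw [hr, ← mul_inv, Real.mul_self_sqrt hApos.le]
        rw [e]
        simp only [abs_mul, abs_of_pos hrpos]
        calc r * (r * |L x x|) = (r * r) * |L x x| := by ring
          _ = |L x x|⁻¹ * |L x x| := by rw [hrr]
          _ = 1 := inv_mul_cancel₀ hApos.ne'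
    have hdich : (∀ ε : ℝ, 0 < ε → ∃ x : E, ‖x‖ ≤ ε ∧ L x x = 1) ∨
        (∀ ε : ℝ, 0 < ε → ∃ x : E, ‖x‖ ≤ ε ∧ L x x = -1) := by
      by_cases hA : ∀ ε : ℝ, 0 < ε → ∃ x : E, ‖x‖ ≤ ε ∧ L x x = 1
      · exact Or.inl hA
      · right
        push_neg at hA
        obtain ⟨ε₀, hε₀, hno⟩ := hA
        intro ε hε
        obtain ⟨x, hx1, hx2⟩ := hsmall (min ε ε₀) (lt_min hε hε₀)
        have hne : L x x ≠ 1 := hno x (hx1.trans (min_le_right _ _))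
        refine ⟨x, hx1.trans (min_le_left _ _), ?_⟩
        rcases (abs_eq (by norm_num : (0:ℝ) ≤ 1)).1 hx2 with h | h
        · exact absurd h hne
        · exact h
    rcases hdich with h | h
    · exact main_aux L hsym hconn h
    · have hsym' : ∀ x y : E, (-L) x y = (-L) y x := by
        intro x y
        simp [hsym x y]
      have hconn' : ∀ C : Set E, IsConnected C →
          IsConnected ((fun x => (-L : E →ₗ[ℝ] E →ₗ[ℝ] ℝ) x x) '' C) := by
        intro C hC
        have h1 : (fun x => (-L : E →ₗ[ℝ] E →ₗ[ℝ] ℝ) x x) '' C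
            = (fun t : ℝ => -t) '' ((fun x => L x x) '' C) := by
          rw [Set.image_image]
          simp
        rw [h1]
        exact (hconn C hC).image _ continuous_neg.continuousOn
      have h' : ∀ ε : ℝ, 0 < ε → ∃ x : E, ‖x‖ ≤ ε ∧
          (-L : E →ₗ[ℝ] E →ₗ[ℝ] ℝ) x x = 1 := by
        intro ε hε
        obtain ⟨x, hx1, hx2⟩ := h ε hε
        exact ⟨x, hx1, by simp [hx2]⟩
      exact main_aux (-L) hsym' hconn' h'
end

section
/- Let E be a real normed space and L : Eⁿ → ℝ an n-linear form (not assumed continuous). If for every connected subset C of Eⁿ (with the product topology) the image L(C) is a connected subset of ℝ, then L is continuous. -/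
open Function Set

/-- A linear functional on a real normed space mapping connected sets to connected
sets is continuous. -/
theorem aux_linear_connected {E : Type*} [NormedAddCommGroup E] [NormedSpace ℝ E]
    (f : E →ₗ[ℝ] ℝ)
    (hconn : ∀ C : Set E, IsConnected C → IsConnected (f '' C)) :
    Continuous f := by
  rcases f.isClosed_or_dense_ker with hker | hker
  · exact f.continuous_of_isClosed_ker hker
  · -- dense kernel: derive a contradiction unless f = 0
    by_cases hf : f = 0
    · simp [hf]
      exact continuous_const
    · exfalso
      obtain ⟨y, hy⟩ : ∃ y, f y ≠ 0 := by
        by_contra h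
        push_neg at h
        exact hf (LinearMap.ext fun x => by simp [h x])
      set x₀ := (f y)⁻¹ • y with hx₀
      have hfx₀ : f x₀ = 1 := by
        simp [hx₀, map_smul, inv_mul_cancel₀ hy]
      set C : Set E := (LinearMap.ker f : Set E) ∪ {x₀} with hC
      have hker_sub : (LinearMap.ker f : Set E) ⊆ C := subset_union_left
      have hC_sub : C ⊆ closure (LinearMap.ker f : Set E) := by
        rw [hker.closure_eq]; exact subset_univ _
      have hpre : IsPreconnected (LinearMap.ker f : Set E) :=
        (Submodule.convex (LinearMap.ker f)).isPreconnected
      have hCconn : IsConnected C :=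
        ⟨⟨0, Or.inl (Submodule.zero_mem _)⟩, hpre.subset_closure hker_sub hC_sub⟩
      have himg : IsConnected (f '' C) := hconn C hCconn
      have h0 : (0 : ℝ) ∈ f '' C := ⟨0, Or.inl (Submodule.zero_mem _), map_zero f⟩
      have h1 : (1 : ℝ) ∈ f '' C := ⟨x₀, Or.inr rfl, hfx₀⟩
      have hsub : f '' C ⊆ {0, 1} := by
        rintro - ⟨z, hz | hz, rfl⟩
        · exact Or.inl (LinearMap.mem_ker.mp hz)
        · simp only [mem_singleton_iff] at hz
          subst hz
          exact Or.inr hfx₀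
      have hord : OrdConnected (f '' C) := himg.isPreconnected.ordConnected
      have hhalf : (1 / 2 : ℝ) ∈ f '' C :=
        hord.out h0 h1 ⟨by norm_num, by norm_num⟩
      rcases hsub hhalf with h | h <;> norm_num at h

/-- A separately continuous multilinear form on a real Banach space is bounded. -/
theorem aux_sep_cont_bound {E : Type*} [NormedAddCommGroup E] [NormedSpace ℝ E]
    [CompleteSpace E] :
    ∀ (n : ℕ) (L : MultilinearMap ℝ (fun _ : Fin n => E) ℝ),
      (∀ (m : Fin n → E) (i : Fin n), Continuous fun x => L (update m i x)) →
      ∃ C : ℝ, ∀ m, ‖L m‖ ≤ C * ∏ i, ‖m i‖ := by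
  intro n
  induction n with
  | zero =>
    intro L _
    refine ⟨‖L (fun i => i.elim0)‖, fun m => ?_⟩
    have : m = fun i => i.elim0 := Subsingleton.elim _ _
    simp [this]
  | succ n IH =>
    intro L hL
    -- for each x, the curried map is separately continuous, hence bounded by IH
    have hcurry : ∀ x : E, ∃ C : ℝ, ∀ m : Fin n → E,
        ‖L.curryLeft x m‖ ≤ C * ∏ i, ‖m i‖ := by
      intro x
      apply IH
      intro m i
      have : (fun y => (L.curryLeft x) (update m i y))
          = fun y => L (update (Fin.cons x m) i.succ y) := by
        funext y
        rw [MultilinearMap.curryLeft_apply, Fin.cons_update]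
      rw [this]
      exact hL (Fin.cons x m) i.succ
    -- Banach–Steinhaus for the family indexed by the "unit polyball"
    set ι := {m : Fin n → E // ∀ i, ‖m i‖ ≤ 1} with hι
    have hcont0 : ∀ m : Fin n → E, Continuous fun x => L (Fin.cons x m) := by
      intro m
      have : (fun x => L (Fin.cons x m))
          = fun x => L (update (Fin.cons 0 m) 0 x) := by
        funext x
        rw [Fin.update_cons_zero]
      rw [this]
      exact hL (Fin.cons 0 m) 0
    let g : ι → E →L[ℝ] ℝ := fun m =>
      { toLinearMap :=
          { toFun := fun x => L (Fin.cons x m.1)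
            map_add' := fun x y => L.cons_add m.1 x y
            map_smul' := fun c x => L.cons_smul m.1 c x }
        cont := hcont0 m.1 }
    have hpt : ∀ x : E, ∃ C : ℝ, ∀ m : ι, ‖g m x‖ ≤ C := by
      intro x
      obtain ⟨C, hC⟩ := hcurry x
      refine ⟨max C 0, fun m => ?_⟩
      have h1 : ‖L.curryLeft x m.1‖ ≤ C * ∏ i, ‖m.1 i‖ := hC m.1
      have hprod : ∏ i, ‖m.1 i‖ ≤ 1 :=
        Finset.prod_le_one (fun i _ => norm_nonneg _) (fun i _ => m.2 i)
      have hprod0 : (0 : ℝ) ≤ ∏ i, ‖m.1 i‖ :=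
        Finset.prod_nonneg fun i _ => norm_nonneg _
      have : ‖g m x‖ = ‖L.curryLeft x m.1‖ := by
        simp [g, MultilinearMap.curryLeft_apply]
      rw [this]
      calc ‖L.curryLeft x m.1‖ ≤ C * ∏ i, ‖m.1 i‖ := h1
        _ ≤ max C 0 * 1 := by
            rcases le_or_gt C 0 with h | h
            · calc C * ∏ i, ‖m.1 i‖ ≤ 0 := mul_nonpos_of_nonpos_of_nonneg h hprod0
                _ ≤ max C 0 * 1 := by simp [le_max_right]
            · exact mul_le_mul (le_max_left _ _) hprod hprod0
                (le_trans h.le (le_max_left _ _))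
        _ = max C 0 := mul_one _
    obtain ⟨C', hC'⟩ := banach_steinhaus hpt
    have hC'0 : (0 : ℝ) ≤ C' := le_trans (norm_nonneg _)
      (hC' ⟨fun _ => 0, fun i => by simp⟩)
    refine ⟨C', fun v => ?_⟩
    -- scaling argument
    set c : Fin n → ℝ := fun i => ‖v i.succ‖ with hc
    set m : Fin n → E := fun i => ‖v i.succ‖⁻¹ • v i.succ with hm
    have hcm : ∀ i, c i • m i = v i.succ := by
      intro i
      rcases eq_or_ne (v i.succ) 0 with h | h
      · simp [hc, hm, h]
      · simp only [hc, hm, smul_smul]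
        rw [mul_inv_cancel₀ (norm_ne_zero_iff.mpr h), one_smul]
    have hm1 : ∀ i, ‖m i‖ ≤ 1 := by
      intro i
      rcases eq_or_ne (v i.succ) 0 with h | h
      · simp [hm, h]
      · simp only [hm, norm_smul, norm_inv, norm_norm]
        rw [inv_mul_cancel₀ (norm_ne_zero_iff.mpr h)]
    have hv : v = Fin.cons (v 0) (fun i => c i • m i) := by
      funext j
      refine Fin.cases ?_ ?_ j
      · simp
      · intro i
        simp [hcm i]
    have key : L v = (∏ i, c i) • L (Fin.cons (v 0) m) := by
      conv_lhs => rw [hv]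
      have := (L.curryLeft (v 0)).map_smul_univ c m
      simpa [MultilinearMap.curryLeft_apply] using this
    have hbound : ‖L (Fin.cons (v 0) m)‖ ≤ C' * ‖v 0‖ := by
      have h1 : ‖g ⟨m, hm1⟩ (v 0)‖ ≤ ‖g ⟨m, hm1⟩‖ * ‖v 0‖ :=
        (g ⟨m, hm1⟩).le_opNorm (v 0)
      have h2 : ‖g ⟨m, hm1⟩‖ * ‖v 0‖ ≤ C' * ‖v 0‖ :=
        mul_le_mul_of_nonneg_right (hC' ⟨m, hm1⟩) (norm_nonneg _)
      exact le_trans h1 h2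
    have hprodc : (0 : ℝ) ≤ ∏ i, c i :=
      Finset.prod_nonneg fun i _ => norm_nonneg _
    calc ‖L v‖ = (∏ i, c i) * ‖L (Fin.cons (v 0) m)‖ := by
          rw [key, norm_smul, Real.norm_eq_abs, abs_of_nonneg hprodc]
      _ ≤ (∏ i, c i) * (C' * ‖v 0‖) := by
          exact mul_le_mul_of_nonneg_left hbound hprodc
      _ = C' * ∏ i, ‖v i‖ := by
          rw [Fin.prod_univ_succ]
          simp only [hc]
          ring

/-- An `n`-linear form on a real Banach space mapping connected subsets of `Eⁿ`
(product topology) to connected subsets of `ℝ` is continuous. -/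
theorem stmt_7
    {E : Type*} [NormedAddCommGroup E] [NormedSpace ℝ E] [CompleteSpace E]
    (n : ℕ) (L : MultilinearMap ℝ (fun _ : Fin n => E) ℝ)
    (hconn : ∀ C : Set (Fin n → E), IsConnected C → IsConnected (L '' C)) :
    Continuous L := by
  have hsep : ∀ (m : Fin n → E) (i : Fin n), Continuous fun x => L (update m i x) := by
    intro m i
    have hlin : Continuous (L.toLinearMap m i) := by
      apply aux_linear_connected
      intro C hC
      have hupd : Continuous fun x : E => update m i x := by
        apply continuous_pi
        intro j
        rcases eq_or_ne j i with h | h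
        · subst h; simpa using continuous_id'
        · simp only [update_of_ne h]
          exact continuous_const
      have h1 : IsConnected ((fun x => update m i x) '' C) :=
        hC.image _ hupd.continuousOn
      have h2 := hconn _ h1
      rwa [Set.image_image] at h2
    simpa [MultilinearMap.toLinearMap] using hlin
  obtain ⟨C, hC⟩ := aux_sep_cont_bound n L hsep
  exact L.continuous_of_bound C hC
end

section
/- Let E be a complex normed space and P : E → ℂ a polynomial of degree at most n, with homogenization Q(x,λ) = Σ_{k=0}^{n} λ^{n−k} Pₖ(x) on E ⊕_∞ ℂ. If P is bounded on the closed unit ball of E, then sup{|Q(x,λ)| : ‖x‖ ≤ 1, |λ| ≤ 1} = sup{|P(x)| : ‖x‖ ≤ 1}. -/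
/-- If `P` is a polynomial of degree at most `n` on a complex normed space which is
bounded on the closed unit ball, then the sup of `|Q|` (the homogenization on
`E ⊕_∞ ℂ`) over `‖x‖ ≤ 1, |λ| ≤ 1` equals the sup of `|P|` over `‖x‖ ≤ 1`. -/
theorem stmt_9
    {E : Type*} [NormedAddCommGroup E] [NormedSpace ℂ E]
    (n : ℕ) (P : E → ℂ)
    (L : ∀ k : ℕ, MultilinearMap ℂ (fun _ : Fin k => E) ℂ)
    (hsym : ∀ (k : ℕ) (σ : Equiv.Perm (Fin k)) (v : Fin k → E),
      L k (fun i => v (σ i)) = L k v)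
    (hP : ∀ x : E, P x = ∑ k ∈ Finset.range (n + 1), L k (fun _ => x))
    (Q : E × ℂ → ℂ)
    (hQ : ∀ p : E × ℂ, Q p = ∑ k ∈ Finset.range (n + 1), p.2 ^ (n - k) * L k (fun _ => p.1))
    (hbdd : ∃ M : ℝ, ∀ x : E, ‖x‖ ≤ 1 → ‖P x‖ ≤ M) :
    sSup {r : ℝ | ∃ x : E, ∃ lam : ℂ, ‖x‖ ≤ 1 ∧ ‖lam‖ ≤ 1 ∧
        r = ‖Q (x, lam)‖} =
      sSup {r : ℝ | ∃ x : E, ‖x‖ ≤ 1 ∧ r = ‖P x‖} := by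
  obtain ⟨M, hM⟩ := hbdd
  set B : Set ℝ := {r : ℝ | ∃ x : E, ‖x‖ ≤ 1 ∧ r = ‖P x‖} with hB
  set A : Set ℝ := {r : ℝ | ∃ x : E, ∃ lam : ℂ, ‖x‖ ≤ 1 ∧ ‖lam‖ ≤ 1 ∧
        r = ‖Q (x, lam)‖} with hA
  have hBbdd : BddAbove B := by
    refine ⟨M, ?_⟩
    rintro r ⟨x, hx, rfl⟩
    exact hM x hx
  set S := sSup B with hS
  have hPS : ∀ x : E, ‖x‖ ≤ 1 → ‖P x‖ ≤ S :=
    fun x hx => le_csSup hBbdd ⟨x, hx, rfl⟩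
  -- Key : every element of A is ≤ S, via maximum modulus
  have key : ∀ r ∈ A, r ≤ S := by
    rintro r ⟨x, lam, hx, hlam, rfl⟩
    set g : ℂ → ℂ := fun z => ∑ k ∈ Finset.range (n + 1),
        z ^ (n - k) * L k (fun _ => x) with hg
    have hdiff : Differentiable ℂ g := by
      apply Differentiable.fun_sum
      intro k _
      exact (differentiable_pow _).mul (differentiable_const _)
    -- boundary bound
    have hfront : ∀ z ∈ frontier (Metric.ball (0 : ℂ) 1), ‖g z‖ ≤ S := by
      intro z hz
      rw [frontier_ball (0 : ℂ) one_ne_zero] at hz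
      have hz1 : ‖z‖ = 1 := by
        simpa [Complex.dist_eq] using hz
      have hz0 : z ≠ 0 := by
        intro h; rw [h] at hz1; simp at hz1
      have hxz : ‖z⁻¹ • x‖ ≤ 1 := by
        rw [norm_smul, norm_inv]
        simp only [hz1, inv_one, one_mul]
        exact hx
      have hgz : g z = z ^ n * P (z⁻¹ • x) := by
        rw [hP, Finset.mul_sum]
        apply Finset.sum_congr rfl
        intro k hk
        have hk' : k ≤ n := Nat.lt_succ_iff.mp (Finset.mem_range.mp hk)
        have : (L k) (fun _ => z⁻¹ • x) = z⁻¹ ^ k * (L k) (fun _ => x) := by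
          have := (L k).map_smul_univ (fun _ => z⁻¹) (fun _ => x)
          simpa [Finset.prod_const, smul_eq_mul] using this
        have hz2 : z ^ n * z⁻¹ ^ k = z ^ (n - k) := by
          rw [inv_pow]; exact (pow_sub₀ z hz0 hk').symm
        rw [this, ← mul_assoc, hz2]
      rw [hgz]
      have : ‖z ^ n * P (z⁻¹ • x)‖ = ‖P (z⁻¹ • x)‖ := by
        rw [norm_mul, norm_pow]
        simp [hz1]
      rw [this]
      exact hPS _ hxz
    have hmem : lam ∈ closure (Metric.ball (0 : ℂ) 1) := by
      rw [closure_ball (0 : ℂ) one_ne_zero]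
      simpa [Complex.dist_eq] using hlam
    have := Complex.norm_le_of_forall_mem_frontier_norm_le
      (Metric.isBounded_ball) hdiff.diffContOnCl hfront hmem
    have hQg : ‖Q (x, lam)‖ = ‖g lam‖ := by
      rw [hQ]
    rw [hQg]
    exact this
  have hAne : A.Nonempty := ⟨‖Q (0, 1)‖, 0, 1, by simp, by simp, rfl⟩
  apply le_antisymm
  · exact csSup_le hAne key
  · have hBne : B.Nonempty := ⟨‖P 0‖, 0, by simp, rfl⟩
    apply csSup_le_csSup ⟨S, key⟩ hBne
    rintro r ⟨x, hx, rfl⟩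
    refine ⟨x, 1, hx, by simp, ?_⟩
    rw [hQ, hP]
    simp
end

section
/- Let I be an uncountable set and for each nonempty C ⊆ I define H_C : ℝ × I^ℕ → ℝ by H_C(x,(x_j)) = x if all x_j ∈ C, else 0. Then every nontrivial finite linear combination Σ_{k=1}^m λ_k H_{C_k} with distinct nonempty sets C_k and all λ_k ≠ 0 is an unbounded function. -/
open scoped Classical

/-- Every nontrivial finite linear combination (distinct nonempty sets, all nonzero
coefficients) of the functions `H_C` is unbounded on `ℝ × I^ℕ`. -/
theorem stmt_13
    (I : Type*) [Uncountable I]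
    (m : ℕ) (hm : 1 ≤ m) (C : Fin m → Set I)
    (hinj : Function.Injective C) (hne : ∀ k, (C k).Nonempty)
    (lam : Fin m → ℝ) (hlam : ∀ k, lam k ≠ 0) :
    ¬ ∃ M : ℝ, ∀ p : ℝ × (ℕ → I),
      |∑ k : Fin m, lam k * (if ∀ j : ℕ, p.2 j ∈ C k then p.1 else 0)| ≤ M := by
  rintro ⟨M, hM⟩
  -- pick a maximal set among the C j
  have hmne : (Finset.univ.image C).Nonempty := by
    refine Finset.Nonempty.image ?_ C
    exact Finset.univ_nonempty_iff.mpr ⟨⟨0, hm⟩⟩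
  obtain ⟨S, hSm⟩ := Finset.exists_maximal hmne
  have hS : S ∈ Finset.univ.image C := hSm.prop
  have hmax : ∀ x ∈ Finset.univ.image C, ¬ S < x := fun x hx hlt =>
    lt_irrefl S (lt_of_lt_of_le hlt (hSm.2 hx hlt.le))
  obtain ⟨k, _, hk⟩ := Finset.mem_image.mp hS
  subst hk
  -- for each j ≠ k, choose an element of C k \ C j
  have hchoice : ∀ j : Fin m, j ≠ k → ∃ x, x ∈ C k ∧ x ∉ C j := by
    intro j hj
    by_contra h
    push_neg at h
    have hsub : C k ⊆ C j := fun x hx => h x hx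
    have hlt : C k < C j := lt_of_le_of_ne hsub (fun he => hj (hinj he).symm)
    exact hmax (C j) (Finset.mem_image_of_mem C (Finset.mem_univ j)) hlt
  have hch : ∀ j : Fin m, ∃ x, x ∈ C k ∧ (j ≠ k → x ∉ C j) := by
    intro j
    by_cases h : j = k
    · exact ⟨(hne k).choose, (hne k).choose_spec, fun hf => absurd h hf⟩
    · exact ⟨(hchoice j h).choose, (hchoice j h).choose_spec.1,
        fun _ => (hchoice j h).choose_spec.2⟩
  choose g hg1 hg2 using hch
  -- the sequence
  set f : ℕ → I := fun n => g ⟨n % m, Nat.mod_lt n hm⟩ with hf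
  have hfk : ∀ n, f n ∈ C k := fun n => hg1 _
  have hfj : ∀ j : Fin m, j ≠ k → ¬ ∀ n, f n ∈ C j := by
    intro j hj hall
    have := hall j.val
    have hjm : (⟨j.val % m, Nat.mod_lt _ hm⟩ : Fin m) = j := by
      ext; simp [Nat.mod_eq_of_lt j.isLt]
    rw [hf] at this
    simp only [hjm] at this
    exact hg2 j hj this
  -- evaluate at (x, f)
  set x : ℝ := (|M| + 1) / |lam k| with hx
  have habs : |lam k| > 0 := abs_pos.mpr (hlam k)
  have := hM (x, f)
  have hsum : ∑ j : Fin m, lam j * (if ∀ n : ℕ, f n ∈ C j then x else 0) = lam k * x := by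
    rw [Finset.sum_eq_single k]
    · simp [hfk]
    · intro j _ hj
      simp [hfj j hj]
    · simp
  rw [hsum] at this
  have : |lam k| * |x| ≤ M := by rwa [abs_mul] at this
  have hxval : |x| = (|M| + 1) / |lam k| := by
    rw [hx, abs_div, abs_abs, abs_of_nonneg (by positivity : (0:ℝ) ≤ |M| + 1)]
  rw [hxval, mul_div_cancel₀ _ (ne_of_gt habs)] at this
  linarith [abs_nonneg M, le_abs_self M]
end

section
/- If I is an infinite set with card(I) = card(ℝ × I^ℕ) (in particular any uncountable I with card(I)^{ℵ₀} = card(I), e.g. an uncountable subset of ℝ of full cardinality 𝔠), then the set of unbounded real-valued functions on I is 2^{card(I)}-lineable: there exists a linearly independent family of cardinality 2^{card(I)} of functions I → ℝ every nontrivial finite linear combination of which is unbounded. -/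
universe u

open Filter Finset Real Topology

noncomputable section

namespace Stmt14Aux

open scoped Classical

variable {I : Type u}

/-- Weighted indicator sum in base 1/3. -/
def t (C : Set I) (g : ℕ → I) : ℝ :=
  ∑' n : ℕ, (if g n ∈ C then (1/3 : ℝ) ^ n else 0)

lemma summable_aux (C : Set I) (g : ℕ → I) :
    Summable (fun n : ℕ => if g n ∈ C then (1/3 : ℝ) ^ n else 0) := by
  apply Summable.of_nonneg_of_le (fun n => ?_) (fun n => ?_)
    (summable_geometric_of_lt_one (by norm_num) (by norm_num : (1/3:ℝ) < 1))
  · split <;> positivity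
  · split
    · exact le_refl _
    · positivity

lemma t_nonneg (C : Set I) (g : ℕ → I) : 0 ≤ t C g :=
  tsum_nonneg fun n => by split <;> positivity

lemma t_lt (A B : Set I) (g : ℕ → I) (n : ℕ)
    (hk : ∀ k < n, ((g k ∈ A) ↔ (g k ∈ B)))
    (hA : g n ∈ A) (hB : g n ∉ B) : t B g < t A g := by
  have hsA := summable_aux A g
  have hsB := summable_aux B g
  set f : ℕ → ℝ := fun k =>
    (if g k ∈ A then (1/3:ℝ)^k else 0) - (if g k ∈ B then (1/3:ℝ)^k else 0) with hf
  have hsf : Summable f := hsA.sub hsB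
  have h1 : t A g - t B g = ∑' k, f k := by
    rw [t, t, ← Summable.tsum_sub hsA hsB]
  have hsplit : ∑ k ∈ Finset.range (n+1), f k + ∑' k, f (k + (n+1)) = ∑' k, f k :=
    Summable.sum_add_tsum_nat_add (n+1) hsf
  have hhead : ∑ k ∈ Finset.range (n+1), f k = (1/3:ℝ)^n := by
    rw [Finset.sum_eq_single_of_mem n (Finset.self_mem_range_succ n)]
    · simp [hf, hA, hB]
    · intro k hkm hkn
      have hklt : k < n := lt_of_le_of_ne (Nat.lt_succ_iff.mp (Finset.mem_range.mp hkm)) hkn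
      have := hk k hklt
      by_cases h : g k ∈ A
      · simp [hf, h, this.mp h]
      · have hB' : g k ∉ B := fun hb => h (this.mpr hb)
        simp [hf, h, hB']
  have htail : |∑' k, f (k + (n+1))| ≤ (1/2:ℝ) * (1/3:ℝ)^n := by
    have hsum3 : Summable (fun k : ℕ => (1/3:ℝ)^(k + (n+1))) := by
      simpa [pow_add] using
        (summable_geometric_of_lt_one (by norm_num) (by norm_num : (1/3:ℝ) < 1)).mul_right
          ((1/3:ℝ)^(n+1))
    have hb : ∀ k : ℕ, |f (k + (n+1))| ≤ (1/3:ℝ)^(k + (n+1)) := by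
      intro k
      have h3 : (0:ℝ) ≤ (1/3:ℝ)^(k + (n+1)) := by positivity
      simp only [hf]
      split <;> split <;> simp [abs_of_nonneg, h3, abs_nonneg] <;> linarith [abs_of_nonneg h3]
    have hshift : Summable (fun k : ℕ => f (k + (n+1))) :=
      (summable_nat_add_iff (n+1)).mpr hsf
    calc |∑' k, f (k + (n+1))| ≤ ∑' k, |f (k + (n+1))| := by
          simpa [Real.norm_eq_abs] using
            norm_tsum_le_tsum_norm (f := fun k => f (k + (n+1)))
              (by simpa [Real.norm_eq_abs] using summable_abs_iff.mpr hshift)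
      _ ≤ ∑' k, (1/3:ℝ)^(k + (n+1)) := by
          exact Summable.tsum_le_tsum hb (summable_abs_iff.mpr hshift) hsum3
      _ = (1/2:ℝ) * (1/3:ℝ)^n := by
          have : ∑' k : ℕ, (1/3:ℝ)^(k + (n+1)) = (∑' k : ℕ, (1/3:ℝ)^k) * (1/3:ℝ)^(n+1) := by
            simp [pow_add, tsum_mul_right]
          rw [this, tsum_geometric_of_lt_one (by norm_num) (by norm_num : (1/3:ℝ) < 1)]
          ring
  have hpos : (0:ℝ) < (1/3:ℝ)^n := by positivity
  have habs := abs_le.mp htail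
  have : 0 < t A g - t B g := by
    rw [h1, ← hsplit, hhead]
    linarith [habs.1]
  linarith

lemma t_ne (A B : Set I) (g : ℕ → I) (h : ∃ n, ¬((g n ∈ A) ↔ (g n ∈ B))) :
    t A g ≠ t B g := by
  have hn := Nat.find_spec h
  have hmin : ∀ k < Nat.find h, ((g k ∈ A) ↔ (g k ∈ B)) :=
    fun k hk => not_not.mp (Nat.find_min h hk)
  by_cases hA : g (Nat.find h) ∈ A
  · have hB : g (Nat.find h) ∉ B := fun hB => hn ⟨fun _ => hB, fun _ => hA⟩
    exact ne_of_gt (t_lt A B g _ hmin hA hB)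
  · have hB : g (Nat.find h) ∈ B := by tauto
    exact (ne_of_gt (t_lt B A g _ (fun k hk => (hmin k hk).symm) hB hA)).symm

end Stmt14Aux

end

/-- If `I` is infinite with `card I = card (ℝ × I^ℕ)`, then the set of unbounded
real functions on `I` is `2^card I`-lineable: there is a linearly independent family,
indexed by `Set I` (hence of cardinality `2^card I`), of functions `I → ℝ` all of whose
nontrivial finite linear combinations are unbounded. -/
theorem stmt_14
    (I : Type u) [Infinite I]
    (hcard : Cardinal.mk I = Cardinal.mk (ℝ × (ℕ → I))) :
    ∃ F : Set I → (I → ℝ),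
      LinearIndependent ℝ F ∧
      ∀ (s : Finset (Set I)) (c : Set I → ℝ), (∃ a ∈ s, c a ≠ 0) →
        ¬ ∃ M : ℝ, ∀ i : I, |∑ a ∈ s, c a * F a i| ≤ M := by
  classical
  obtain ⟨e⟩ := Cardinal.eq.mp hcard
  set F : Set I → I → ℝ :=
    fun C i => Real.exp ((e i).1 * (1 + Stmt14Aux.t C (e i).2)) with hFdef
  have hU : ∀ (s : Finset (Set I)) (c : Set I → ℝ), (∃ a ∈ s, c a ≠ 0) →
      ¬ ∃ M : ℝ, ∀ i : I, |∑ a ∈ s, c a * F a i| ≤ M := by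
    rintro s c hc ⟨M, hM⟩
    -- build a sequence g hitting symmetric differences of all pairs from s
    have hne : Nonempty I := inferInstance
    let w : Set I × Set I → I := fun p =>
      if h : (symmDiff p.1 p.2).Nonempty then h.choose else Classical.arbitrary I
    let pl : List (Set I × Set I) := (s ×ˢ s).toList
    let g : ℕ → I := fun n => w (pl.getD n (∅, ∅))
    have hg : ∀ A ∈ s, ∀ B ∈ s, A ≠ B → ∃ n, ¬((g n ∈ A) ↔ (g n ∈ B)) := by
      intro A hA B hB hAB
      have hmem : (A, B) ∈ pl := by
        simp [pl, Finset.mem_product, hA, hB]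
      obtain ⟨n, hlt, hget⟩ := List.mem_iff_getElem.mp hmem
      refine ⟨n, ?_⟩
      have hgd : pl.getD n (∅, ∅) = (A, B) := by
        rw [List.getD_eq_getElem?_getD, List.getElem?_eq_getElem hlt, hget]
        rfl
      have hnon : (symmDiff A B).Nonempty := Set.symmDiff_nonempty.mpr hAB
      have hgn : g n ∈ symmDiff A B := by
        show w (pl.getD n (∅, ∅)) ∈ _
        rw [hgd]
        simp only [w, dif_pos hnon]
        exact hnon.choose_spec
      rw [Set.mem_symmDiff] at hgn
      tauto
    set T : Set I → ℝ := fun C => 1 + Stmt14Aux.t C g with hT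
    have hbx : ∀ x : ℝ, |∑ a ∈ s, c a * Real.exp (x * T a)| ≤ M := by
      intro x
      have := hM (e.symm (x, g))
      simpa [hFdef, hT, e.apply_symm_apply] using this
    set s' : Finset (Set I) := s.filter fun a => c a ≠ 0 with hs'
    have hs'ne : s'.Nonempty := by
      obtain ⟨a, ha, hca⟩ := hc
      exact ⟨a, Finset.mem_filter.mpr ⟨ha, hca⟩⟩
    obtain ⟨C₀, hC₀, hmax⟩ := s'.exists_max_image T hs'ne
    have hC₀s : C₀ ∈ s := (Finset.mem_filter.mp hC₀).1
    have hcC₀ : c C₀ ≠ 0 := (Finset.mem_filter.mp hC₀).2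
    -- the renormalized combination tends to c C₀
    have htend : Tendsto (fun x : ℝ => ∑ a ∈ s, c a * Real.exp (x * (T a - T C₀)))
        atTop (𝓝 (c C₀)) := by
      have hCeq : c C₀ = ∑ a ∈ s, (if a = C₀ then c C₀ else 0) := by
        rw [Finset.sum_ite_eq' s C₀ fun _ => c C₀, if_pos hC₀s]
      rw [hCeq]
      apply tendsto_finset_sum
      intro a ha
      by_cases h1 : a = C₀
      · subst h1
        simpa [sub_self] using (tendsto_const_nhds :
          Tendsto (fun _ : ℝ => c a) atTop (𝓝 (c a)))
      · by_cases h2 : c a = 0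
        · simpa [h1, h2] using (tendsto_const_nhds :
            Tendsto (fun _ : ℝ => (0:ℝ)) atTop (𝓝 0))
        · have haS' : a ∈ s' := Finset.mem_filter.mpr ⟨ha, h2⟩
          have hTne : T a ≠ T C₀ := by
            simp only [hT, add_right_cancel_iff]
            intro habs
            exact Stmt14Aux.t_ne a C₀ g (hg a ha C₀ hC₀s h1) (by linarith [habs])
          have hlt : T a < T C₀ := lt_of_le_of_ne (hmax a haS') hTne
          have h3 : Tendsto (fun x : ℝ => x * (T a - T C₀)) atTop atBot :=
            tendsto_id.atTop_mul_const_of_neg (by linarith)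
          have h4 : Tendsto (fun x : ℝ => Real.exp (x * (T a - T C₀))) atTop (𝓝 0) :=
            Real.tendsto_exp_atBot.comp h3
          simpa [h1] using h4.const_mul (c a)
    -- but it also tends to 0
    have hT₀pos : (0:ℝ) < T C₀ := by
      have := Stmt14Aux.t_nonneg C₀ g
      simp only [hT]; linarith
    have hexp0 : Tendsto (fun x : ℝ => Real.exp (-(x * T C₀))) atTop (𝓝 0) := by
      apply Real.tendsto_exp_atBot.comp
      have : Tendsto (fun x : ℝ => x * (-(T C₀))) atTop atBot :=
        tendsto_id.atTop_mul_const_of_neg (by linarith)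
      simpa [mul_comm, mul_neg, neg_mul] using this
    have hzero : Tendsto (fun x : ℝ => ∑ a ∈ s, c a * Real.exp (x * (T a - T C₀)))
        atTop (𝓝 0) := by
      have hbd : ∀ x : ℝ, ‖∑ a ∈ s, c a * Real.exp (x * (T a - T C₀))‖ ≤
          M * Real.exp (-(x * T C₀)) := by
        intro x
        have key : ∑ a ∈ s, c a * Real.exp (x * (T a - T C₀)) =
            (∑ a ∈ s, c a * Real.exp (x * T a)) * Real.exp (-(x * T C₀)) := by
          rw [Finset.sum_mul]
          refine Finset.sum_congr rfl fun a _ => ?_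
          rw [mul_assoc, ← Real.exp_add]
          ring_nf
        rw [key, Real.norm_eq_abs, abs_mul, abs_of_pos (Real.exp_pos _)]
        exact mul_le_mul_of_nonneg_right (hbx x) (Real.exp_pos _).le
      have h0 : Tendsto (fun x : ℝ => M * Real.exp (-(x * T C₀))) atTop (𝓝 0) := by
        simpa using hexp0.const_mul M
      exact squeeze_zero_norm hbd h0
    exact hcC₀ (tendsto_nhds_unique htend hzero)
  refine ⟨F, ?_, hU⟩
  rw [linearIndependent_iff']
  intro s cf hsum a ha
  by_contra hca
  refine hU s cf ⟨a, ha, hca⟩ ⟨0, fun i => ?_⟩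
  have hz : (∑ b ∈ s, cf b • F b) i = 0 := by rw [hsum]; rfl
  simp only [Finset.sum_apply, Pi.smul_apply, smul_eq_mul] at hz
  simp [hz]
end

section
/- Let E be a real normed space of infinite (algebraic) dimension λ. Then the set of non-continuous (unbounded) linear functionals on E is 2^λ-lineable: there is a linearly independent family of cardinality 2^λ of linear functionals on E, every nontrivial finite linear combination of which is discontinuous. -/
universe u

open Cardinal

/-- On a real normed space of infinite algebraic dimension `λ` (with `λ^ℵ₀ = λ`),
the set of discontinuous linear functionals is `2^λ`-lineable: there is a linearly
independent family of `2^λ` linear functionals every nontrivial finite linear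
combination of which is discontinuous. -/
theorem stmt_16
    {E : Type u} [NormedAddCommGroup E] [NormedSpace ℝ E]
    (hinf : ¬ FiniteDimensional ℝ E)
    (hrank : Module.rank ℝ E ^ Cardinal.aleph0.{u} = Module.rank ℝ E) :
    ∃ (ι : Type u) (F : ι → (E →ₗ[ℝ] ℝ)),
      Cardinal.mk ι = 2 ^ Module.rank ℝ E ∧
      LinearIndependent ℝ F ∧
      ∀ (s : Finset ι) (c : ι → ℝ), (∃ i ∈ s, c i ≠ 0) →
        ¬ Continuous (⇑(∑ i ∈ s, c i • F i) : E → ℝ) := by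
  classical
  set b := Module.Basis.ofVectorSpace ℝ E with hb
  set ι₀ := Module.Basis.ofVectorSpaceIndex ℝ E
  have hι₀ : #ι₀ = Module.rank ℝ E := b.mk_eq_rank''
  have hrinf : ℵ₀ ≤ Module.rank ℝ E := by
    by_contra h
    exact hinf (Module.rank_lt_aleph0_iff.mp (lt_of_not_ge h))
  have hI : Infinite ι₀ := by
    rw [← Cardinal.aleph0_le_mk_iff, hι₀]; exact hrinf
  -- an equiv ι₀ ≃ ι₀ × ℕ
  obtain ⟨e⟩ : Nonempty (ι₀ ≃ ι₀ × ℕ) := by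
    rw [← Cardinal.eq, Cardinal.mk_prod, Cardinal.lift_uzero, Cardinal.mk_nat,
      Cardinal.lift_aleph0, Cardinal.mul_aleph0_eq (Cardinal.aleph0_le_mk ι₀)]
  -- the injective linear embedding (ι₀ → ℝ) →ₗ (E →ₗ ℝ)
  set Ψ : (ι₀ → ℝ) →ₗ[ℝ] (ι₀ → ℝ) :=
    LinearMap.pi (fun i => (((e i).2 : ℝ) * ‖b i‖) • LinearMap.proj (e i).1) with hΨ
  set Φ : (ι₀ → ℝ) →ₗ[ℝ] (E →ₗ[ℝ] ℝ) := (b.constr ℝ).toLinearMap ∘ₗ Ψ with hΦ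
  have hΨval : ∀ (h : ι₀ → ℝ) (i : ι₀), Ψ h i = ((e i).2 : ℝ) * ‖b i‖ * h (e i).1 := by
    intro h i
    simp [hΨ, LinearMap.pi_apply, mul_comm]
  have hΦinj : Function.Injective Φ := by
    have hΨinj : Function.Injective Ψ := by
      intro h₁ h₂ hh
      funext x
      have := congrFun hh (e.symm (x, 1))
      rw [hΨval, hΨval, e.apply_symm_apply] at this
      have hbne : ‖b (e.symm (x, 1))‖ ≠ 0 := by
        simpa using b.ne_zero (e.symm (x, 1))
      simpa [hbne] using this
    exact ((b.constr ℝ).injective).comp hΨinj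
  -- basis of the function space
  set H := Module.Basis.ofVectorSpace ℝ (ι₀ → ℝ)
  set ι := Module.Basis.ofVectorSpaceIndex ℝ (ι₀ → ℝ)
  refine ⟨ι, fun s => Φ (H s), ?_, ?_, ?_⟩
  · -- cardinality: #ι = rank (ι₀ → ℝ) = #(ι₀ → ℝ) = 2 ^ λ
    have h1 : #ι = Module.rank ℝ (ι₀ → ℝ) := H.mk_eq_rank''
    have h2 : Module.rank ℝ (ι₀ → ℝ) = #(ι₀ → ℝ) := rank_fun_infinite
    have h3 : #(ι₀ → ℝ) = 2 ^ Module.rank ℝ E := by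
      rw [Cardinal.mk_arrow, Cardinal.lift_uzero, Cardinal.mk_real, Cardinal.lift_continuum,
        Cardinal.continuum, hι₀, ← Cardinal.power_mul,
        Cardinal.aleph0_mul_eq hrinf]
    rw [h1, h2, h3]
  · exact (H.linearIndependent.map' Φ (LinearMap.ker_eq_bot.mpr hΦinj))
  · intro s c hc hcont
    set h : ι₀ → ℝ := ∑ i ∈ s, c i • H i with hh
    have hgh : (∑ i ∈ s, c i • Φ (H i)) = Φ h := by
      rw [hh, map_sum]
      exact Finset.sum_congr rfl fun i _ => (map_smul Φ (c i) (H i)).symm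
    have hne : h ≠ 0 := by
      intro h0
      obtain ⟨i, his, hci⟩ := hc
      exact hci (linearIndependent_iff'.mp H.linearIndependent s c h0 i his)
    obtain ⟨x₀, hx₀⟩ : ∃ x, h x ≠ 0 := by
      by_contra hall
      push_neg at hall
      exact hne (funext hall)
    rw [hgh] at hcont
    set G : E →L[ℝ] ℝ := ⟨Φ h, hcont⟩ with hG
    have hbound : ∀ x : E, |Φ h x| ≤ ‖G‖ * ‖x‖ := fun x => by
      have h' : |G x| ≤ ‖G‖ * ‖x‖ := by simpa [Real.norm_eq_abs] using G.le_opNorm x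
      exact h'
    obtain ⟨n, hn⟩ := exists_nat_gt (‖G‖ / |h x₀|)
    set i := e.symm (x₀, n)
    have hval : Φ h (b i) = (n : ℝ) * ‖b i‖ * h x₀ := by
      rw [hΦ]
      simp only [LinearMap.comp_apply, LinearEquiv.coe_coe]
      rw [Module.Basis.constr_basis, hΨval, e.apply_symm_apply]
    have hbpos : (0 : ℝ) < ‖b i‖ :=
      norm_pos_iff.mpr (b.ne_zero i)
    have := hbound (b i)
    rw [hval] at this
    have h2 : (n : ℝ) * |h x₀| * ‖b i‖ ≤ ‖G‖ * ‖b i‖ := by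
      calc (n : ℝ) * |h x₀| * ‖b i‖ = |(n : ℝ) * ‖b i‖ * h x₀| := by
            rw [abs_mul, abs_mul, Nat.abs_cast, abs_norm]; ring
        _ ≤ ‖G‖ * ‖b i‖ := this
    have h3 : (n : ℝ) * |h x₀| ≤ ‖G‖ := le_of_mul_le_mul_right h2 hbpos
    have h4 : ‖G‖ / |h x₀| < n := hn
    rw [div_lt_iff₀ (abs_pos.mpr hx₀)] at h4
    linarith
end

section
/- Let E be a real normed space of infinite algebraic dimension λ and n ≥ 1. Then the set of non-continuous n-homogeneous polynomials P : E → ℝ (diagonals of symmetric n-linear forms, unbounded on the unit ball) is 2^λ-lineable. -/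
universe u

/-- On a real normed space of infinite algebraic dimension `λ` (with `λ^ℵ₀ = λ`),
the set of non-continuous `n`-homogeneous polynomials (diagonals of symmetric
`n`-linear forms, unbounded on the unit ball) is `2^λ`-lineable. -/
theorem stmt_18
    {E : Type u} [NormedAddCommGroup E] [NormedSpace ℝ E]
    (hinf : ¬ FiniteDimensional ℝ E)
    (hrank : Module.rank ℝ E ^ Cardinal.aleph0.{u} = Module.rank ℝ E)
    (n : ℕ) (hn : 1 ≤ n) :
    ∃ (ι : Type u) (L : ι → MultilinearMap ℝ (fun _ : Fin n => E) ℝ),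
      Cardinal.mk ι = 2 ^ Module.rank ℝ E ∧
      (∀ (i : ι) (σ : Equiv.Perm (Fin n)) (v : Fin n → E),
        L i (fun t => v (σ t)) = L i v) ∧
      LinearIndependent ℝ (fun i : ι => (fun x : E => L i (fun _ => x))) ∧
      ∀ (s : Finset ι) (c : ι → ℝ), (∃ i ∈ s, c i ≠ 0) →
        ¬ ∃ M : ℝ, ∀ x : E, ‖x‖ ≤ 1 →
          |∑ i ∈ s, c i * L i (fun _ => x)| ≤ M := by
  classical
  set κ := Module.Basis.ofVectorSpaceIndex ℝ E with hκdef
  let B₀ : Module.Basis κ ℝ E := Module.Basis.ofVectorSpace ℝ E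
  have hκ : Cardinal.mk κ = Module.rank ℝ E := B₀.mk_eq_rank''
  have hκinf : Infinite κ := by
    by_contra h
    rw [not_infinite_iff_finite] at h
    exact hinf (Module.Finite.of_basis B₀)
  have hcard : Cardinal.mk (Finset κ × ℕ) = Cardinal.mk κ := by
    rw [Cardinal.mk_prod, Cardinal.mk_finset_of_infinite, Cardinal.mk_nat,
      Cardinal.lift_uzero, Cardinal.lift_aleph0]
    exact Cardinal.mul_aleph0_eq (Cardinal.aleph0_le_mk κ)
  obtain ⟨e⟩ : Nonempty ((Finset κ × ℕ) ≃ κ) := Cardinal.eq.mp hcard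
  let B : Module.Basis (Finset κ × ℕ) ℝ E := B₀.reindex e.symm
  have hB0 : ∀ p, ‖B p‖ ≠ 0 := fun p => norm_ne_zero_iff.2 (B.ne_zero p)
  let g : Set κ → Finset κ → ℝ := fun A F => if (↑F : Set κ) ⊆ A then 1 else 0
  let f : Set κ → E →ₗ[ℝ] ℝ :=
    fun A => B.constr ℝ (fun p => (p.2 : ℝ) * ‖B p‖ * g A p.1)
  have hfB : ∀ A p, f A (B p) = (p.2 : ℝ) * ‖B p‖ * g A p.1 :=
    fun A p => B.constr_basis ℝ _ p
  let L : Set κ → MultilinearMap ℝ (fun _ : Fin n => E) ℝ :=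
    fun A => (MultilinearMap.mkPiAlgebra ℝ (Fin n) ℝ).compLinearMap (fun _ => f A)
  have hdiag : ∀ A x, L A (fun _ => x) = (f A x) ^ n := by
    intro A x
    simp [L, MultilinearMap.compLinearMap_apply, MultilinearMap.mkPiAlgebra_apply,
      Finset.prod_const, Finset.card_univ]
  have hn' : n ≠ 0 := by omega
  -- key unboundedness lemma
  have key : ∀ (s : Finset (Set κ)) (c : Set κ → ℝ), (∃ i ∈ s, c i ≠ 0) →
      ∀ M : ℝ, ∃ x : E, ‖x‖ ≤ 1 ∧ M < |∑ i ∈ s, c i * (f i x) ^ n| := by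
    intro s c hc M
    obtain ⟨i₁, hi₁s, hi₁⟩ := hc
    set T := s.filter (fun i => c i ≠ 0) with hT
    have hTne : T.Nonempty := ⟨i₁, Finset.mem_filter.2 ⟨hi₁s, hi₁⟩⟩
    obtain ⟨i₀, hi₀T, hmax⟩ := T.exists_maximal hTne
    have hci₀ : c i₀ ≠ 0 := (Finset.mem_filter.1 hi₀T).2
    have hi₀s : i₀ ∈ s := (Finset.mem_filter.1 hi₀T).1
    have hwit : ∀ i ∈ T, i ≠ i₀ → ∃ j, j ∈ i₀ ∧ j ∉ i := by
      intro i hi hne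
      by_contra h
      push_neg at h
      have hsub : i₀ ⊆ i := fun j hj => h j hj
      exact hne (le_antisymm (hmax hi hsub) hsub)
    let w : Set κ → κ := fun i =>
      if h : ∃ j, j ∈ i₀ ∧ j ∉ i then h.choose else Classical.arbitrary κ
    let F : Finset κ := (T.erase i₀).image w
    have hF₁ : (↑F : Set κ) ⊆ i₀ := by
      intro j hj
      simp only [F, Finset.coe_image, Set.mem_image, Finset.mem_coe] at hj
      obtain ⟨i, hi, rfl⟩ := hj
      obtain ⟨hine, hiT⟩ := Finset.mem_erase.1 hi
      have hex : ∃ j, j ∈ i₀ ∧ j ∉ i := hwit i hiT hine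
      simp only [w, dif_pos hex]
      exact hex.choose_spec.1
    have hF₂ : ∀ i ∈ T, i ≠ i₀ → ¬ ((↑F : Set κ) ⊆ i) := by
      intro i hiT hne hsub
      have hmem : w i ∈ F :=
        Finset.mem_image_of_mem w (Finset.mem_erase.2 ⟨hne, hiT⟩)
      have hthis := hsub hmem
      have hex : ∃ j, j ∈ i₀ ∧ j ∉ i := hwit i hiT hne
      simp only [w, dif_pos hex] at hthis
      exact hex.choose_spec.2 hthis
    have hgF : ∀ i ∈ s, i ≠ i₀ → c i * g i F = 0 := by
      intro i hi hne
      by_cases hci : c i = 0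
      · simp [hci]
      · have hiT : i ∈ T := Finset.mem_filter.2 ⟨hi, hci⟩
        have : g i F = 0 := if_neg (hF₂ i hiT hne)
        simp [this]
    have hgi₀ : g i₀ F = 1 := if_pos hF₁
    have hsum0 : ∑ i ∈ s, c i * g i F = c i₀ := by
      rw [Finset.sum_eq_single i₀ hgF (fun h => absurd hi₀s h)]
      rw [hgi₀, mul_one]
    have hcabs : 0 < |c i₀| := abs_pos.2 hci₀
    obtain ⟨k, hk⟩ := exists_nat_gt (max (M / |c i₀|) 1)
    have hk1 : (1 : ℝ) ≤ (k : ℝ) := le_of_lt (lt_of_le_of_lt (le_max_right _ _) hk)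
    have hkM : M / |c i₀| < (k : ℝ) := lt_of_le_of_lt (le_max_left _ _) hk
    set b := B (F, k) with hb
    refine ⟨‖b‖⁻¹ • b, ?_, ?_⟩
    · rw [norm_smul, norm_inv, norm_norm, inv_mul_cancel₀ (hB0 _)]
    · have hfx : ∀ A, f A (‖b‖⁻¹ • b) = (k : ℝ) * g A F := by
        intro A
        rw [map_smul, smul_eq_mul, hb, hfB]
        have : ‖B (F, k)‖⁻¹ * (((F, k).2 : ℝ) * ‖B (F, k)‖ * g A (F, k).1)
            = (‖B (F, k)‖⁻¹ * ‖B (F, k)‖) * ((k : ℝ) * g A F) := by ring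
        rw [this, inv_mul_cancel₀ (hB0 _), one_mul]
      have hg : ∀ A, g A F ^ n = g A F := by
        intro A
        by_cases h : (↑F : Set κ) ⊆ A
        · simp [g, h]
        · simp [g, h, zero_pow hn']
      have hterm : ∀ i, c i * (f i (‖b‖⁻¹ • b)) ^ n = (k : ℝ) ^ n * (c i * g i F) := by
        intro i
        rw [hfx, mul_pow, hg]
        ring
      have : ∑ i ∈ s, c i * (f i (‖b‖⁻¹ • b)) ^ n = (k : ℝ) ^ n * c i₀ := by
        rw [Finset.sum_congr rfl (fun i _ => hterm i), ← Finset.mul_sum, hsum0]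
      rw [this, abs_mul, abs_pow, Nat.abs_cast]
      have h1 : M < (k : ℝ) * |c i₀| := (div_lt_iff₀ hcabs).1 hkM
      have h2 : (k : ℝ) * |c i₀| ≤ (k : ℝ) ^ n * |c i₀| := by
        apply mul_le_mul_of_nonneg_right _ (abs_nonneg _)
        calc (k : ℝ) = (k : ℝ) ^ 1 := (pow_one _).symm
        _ ≤ (k : ℝ) ^ n := pow_le_pow_right₀ hk1 hn
      linarith
  refine ⟨Set κ, L, ?_, ?_, ?_, ?_⟩
  · rw [Cardinal.mk_set, hκ]
  · intro A σ v
    simp only [L, MultilinearMap.compLinearMap_apply, MultilinearMap.mkPiAlgebra_apply]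
    exact Equiv.prod_comp σ (fun t => f A (v t))
  · rw [linearIndependent_iff']
    intro t gc hsum i hit
    by_contra hgi
    obtain ⟨x, hx1, hx2⟩ := key t gc ⟨i, hit, hgi⟩ 0
    have hzero : ∑ j ∈ t, gc j * (f j x) ^ n = 0 := by
      have := congrFun hsum x
      simp only [Finset.sum_apply, Pi.smul_apply, smul_eq_mul, Pi.zero_apply] at this
      calc ∑ j ∈ t, gc j * (f j x) ^ n = ∑ j ∈ t, gc j * L j (fun _ => x) := by
            refine Finset.sum_congr rfl (fun j _ => ?_)
            rw [hdiag]
      _ = 0 := this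
    rw [hzero] at hx2
    simp at hx2
  · rintro s c hc ⟨M, hM⟩
    obtain ⟨x, hx1, hx2⟩ := key s c hc M
    have := hM x hx1
    have heq : ∑ i ∈ s, c i * L i (fun _ => x) = ∑ i ∈ s, c i * (f i x) ^ n :=
      Finset.sum_congr rfl (fun i _ => by rw [hdiag])
    rw [heq] at this
    linarith
end
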